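/- arXiv:2307.07024 — 2 statements merged into one kernel-verified Lean document; each statement's English description precedes it below -/
import Mathlib

section
/- The Gaussian density Π with mean m and covariance A solves the stationary Fokker–Planck equation of the two-dimensional Ornstein–Uhlenbeck process: for every y ∈ ℝ², (1/2)Σ_{i,j=1}^{2} ∂²/∂yᵢ∂yⱼ (Σᵢⱼ Π(y)) − Σ_{i=1}^{2} ∂/∂yᵢ (λᵢ(mᵢ − yᵢ) Π(y)) = 0. -/
open MeasureTheory Real Filter Matrix

noncomputable section

/-- The stationary covariance matrix of the 2D OU process. -/
def matA (l₁ l₂ η₁ η₂ ρ : ℝ) : Matrix (Fin 2) (Fin 2) ℝ :=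
  !![η₁^2/(2*l₁), ρ*η₁*η₂/(l₁+l₂); ρ*η₁*η₂/(l₁+l₂), η₂^2/(2*l₂)]

/-- The Gaussian density `Π` on `ℝ²` with mean `(m₁, m₂)` and covariance `matA`. -/
def gaussPi (l₁ l₂ η₁ η₂ ρ m₁ m₂ : ℝ) (p : ℝ × ℝ) : ℝ :=
  (2*π)⁻¹ * (matA l₁ l₂ η₁ η₂ ρ).det ^ (-(1:ℝ)/2) *
    Real.exp (-(1/2) *
      (![p.1 - m₁, p.2 - m₂] ⬝ᵥ ((matA l₁ l₂ η₁ η₂ ρ)⁻¹ *ᵥ ![p.1 - m₁, p.2 - m₂])))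

/-- Partial derivative in the first coordinate. -/
def pd1 (f : ℝ × ℝ → ℝ) (p : ℝ × ℝ) : ℝ := fderiv ℝ f p (1, 0)

/-- Partial derivative in the second coordinate. -/
def pd2 (f : ℝ × ℝ → ℝ) (p : ℝ × ℝ) : ℝ := fderiv ℝ f p (0, 1)

/-- The generator `L` of the two-dimensional OU process. -/
def gen (l₁ l₂ η₁ η₂ ρ m₁ m₂ : ℝ) (g : ℝ × ℝ → ℝ) (p : ℝ × ℝ) : ℝ :=
  (1/2) * η₁^2 * pd1 (pd1 g) p + ρ*η₁*η₂ * pd2 (pd1 g) p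
    + (1/2) * η₂^2 * pd2 (pd2 g) p
    + l₁ * (m₁ - p.1) * pd1 g p + l₂ * (m₂ - p.2) * pd2 g p

/-- A function on `ℝ²` is at most polynomially growing. -/
def PolyGrowth (h : ℝ × ℝ → ℝ) : Prop :=
  ∃ C : ℝ, 0 < C ∧ ∃ n : ℕ, 0 < n ∧ ∀ p : ℝ × ℝ, |h p| ≤ C * (1 + ‖p‖ ^ n)

/-- `g` is `C²` and `g` together with all its partial derivatives up to order 2
are at most polynomially growing. -/
def NicelyC2 (g : ℝ × ℝ → ℝ) : Prop :=
  ContDiff ℝ 2 g ∧ PolyGrowth g ∧ PolyGrowth (pd1 g) ∧ PolyGrowth (pd2 g) ∧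
    PolyGrowth (pd1 (pd1 g)) ∧ PolyGrowth (pd2 (pd1 g)) ∧
    PolyGrowth (pd1 (pd2 g)) ∧ PolyGrowth (pd2 (pd2 g))

/-- The largest eigenvalue of the symmetric 2×2 matrix `matA`. -/
def lamMax (l₁ l₂ η₁ η₂ ρ : ℝ) : ℝ :=
  ((matA l₁ l₂ η₁ η₂ ρ).trace
    + Real.sqrt ((matA l₁ l₂ η₁ η₂ ρ).trace^2 - 4 * (matA l₁ l₂ η₁ η₂ ρ).det)) / 2



/-! ### Auxiliary machinery -/

/-- Gaussian-type kernel with quadratic exponent. -/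
def Eaux (A B C m₁ m₂ : ℝ) (p : ℝ × ℝ) : ℝ :=
  Real.exp (A*(p.1-m₁)^2 + B*(p.1-m₁)*(p.2-m₂) + C*(p.2-m₂)^2)

lemma pd1_eq {f : ℝ × ℝ → ℝ} {p : ℝ × ℝ} (hf : DifferentiableAt ℝ f p) :
    pd1 f p = deriv (fun x => f (x, p.2)) p.1 := by
  have hline : HasFDerivAt (fun x : ℝ => (x, p.2))
      ((ContinuousLinearMap.id ℝ ℝ).prod (0 : ℝ →L[ℝ] ℝ)) p.1 :=
    HasFDerivAt.prodMk (hasFDerivAt_id p.1) (hasFDerivAt_const p.2 p.1)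
  have hcomp := hf.hasFDerivAt.comp p.1 hline
  have hd : HasDerivAt (fun x => f (x, p.2)) (fderiv ℝ f p (1, 0)) p.1 := by
    have := hcomp.hasDerivAt
    exact this
  rw [hd.deriv]; rfl

lemma pd2_eq {f : ℝ × ℝ → ℝ} {p : ℝ × ℝ} (hf : DifferentiableAt ℝ f p) :
    pd2 f p = deriv (fun y => f (p.1, y)) p.2 := by
  have hline : HasFDerivAt (fun y : ℝ => (p.1, y))
      ((0 : ℝ →L[ℝ] ℝ).prod (ContinuousLinearMap.id ℝ ℝ)) p.2 :=
    HasFDerivAt.prodMk (hasFDerivAt_const p.1 p.2) (hasFDerivAt_id p.2)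
  have hcomp := hf.hasFDerivAt.comp p.2 hline
  have hd : HasDerivAt (fun y => f (p.1, y)) (fderiv ℝ f p (0, 1)) p.2 := by
    have := hcomp.hasDerivAt
    exact this
  rw [hd.deriv]; rfl

lemma linexp_diff (A B C m₁ m₂ a b c : ℝ) :
    Differentiable ℝ
      (fun q : ℝ × ℝ => (a + b*(q.1-m₁) + c*(q.2-m₂)) * Eaux A B C m₁ m₂ q) := by
  unfold Eaux; fun_prop

lemma pd1_linexp (A B C m₁ m₂ a b c : ℝ) (p : ℝ × ℝ) :
    pd1 (fun q : ℝ × ℝ => (a + b*(q.1-m₁) + c*(q.2-m₂)) * Eaux A B C m₁ m₂ q) p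
      = (b + (a + b*(p.1-m₁) + c*(p.2-m₂)) * (2*A*(p.1-m₁) + B*(p.2-m₂)))
          * Eaux A B C m₁ m₂ p := by
  rw [pd1_eq ((linexp_diff A B C m₁ m₂ a b c) p)]
  have hxm : HasDerivAt (fun x : ℝ => x - m₁) 1 p.1 := (hasDerivAt_id p.1).sub_const m₁
  have hlin : HasDerivAt (fun x : ℝ => a + b*(x-m₁) + c*(p.2-m₂)) (b*1) p.1 :=
    ((hxm.const_mul b).const_add a).add_const (c*(p.2-m₂))
  have hq := (((hxm.pow 2).const_mul A).add
    ((hxm.const_mul B).mul_const (p.2-m₂))).add_const (C*(p.2-m₂)^2)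
  have h := hlin.mul hq.exp
  unfold Eaux
  erw [h.deriv]
  simp only [Pi.add_apply, Pi.pow_apply]
  push_cast
  ring

lemma pd2_linexp (A B C m₁ m₂ a b c : ℝ) (p : ℝ × ℝ) :
    pd2 (fun q : ℝ × ℝ => (a + b*(q.1-m₁) + c*(q.2-m₂)) * Eaux A B C m₁ m₂ q) p
      = (c + (a + b*(p.1-m₁) + c*(p.2-m₂)) * (B*(p.1-m₁) + 2*C*(p.2-m₂)))
          * Eaux A B C m₁ m₂ p := by
  rw [pd2_eq ((linexp_diff A B C m₁ m₂ a b c) p)]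
  have hym : HasDerivAt (fun y : ℝ => y - m₂) 1 p.2 := (hasDerivAt_id p.2).sub_const m₂
  have hlin : HasDerivAt (fun y : ℝ => a + b*(p.1-m₁) + c*(y-m₂)) (c*1) p.2 :=
    (hym.const_mul c).const_add (a + b*(p.1-m₁))
  have hq := (((hasDerivAt_const p.2 (A*(p.1-m₁)^2)).add
      ((hym.const_mul (B*(p.1-m₁))))).add ((hym.pow 2).const_mul C))
  have h := hlin.mul hq.exp
  unfold Eaux
  erw [h.deriv]
  simp only [Pi.add_apply, Pi.pow_apply]
  push_cast
  ring

lemma quad_eq (a2 b2 c2 X Y : ℝ) (hd : a2*c2 - b2^2 ≠ 0) :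
    -(1/2) * (![X, Y] ⬝ᵥ ((!![a2,b2;b2,c2])⁻¹ *ᵥ ![X, Y]))
      = (-c2/(2*(a2*c2-b2^2)))*X^2 + (b2/(a2*c2-b2^2))*X*Y
          + (-a2/(2*(a2*c2-b2^2)))*Y^2 := by
  have hdet : (!![a2,b2;b2,c2]).det = a2*c2 - b2^2 := by
    simp [Matrix.det_fin_two_of]; ring
  have hinv : (!![a2,b2;b2,c2])⁻¹ = (a2*c2-b2^2)⁻¹ • !![c2,-b2;-b2,a2] := by
    rw [Matrix.inv_def, hdet, Ring.inverse_eq_inv']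
    congr 1
    simp [Matrix.adjugate_fin_two]
  rw [hinv]
  simp [Matrix.mulVec, dotProduct, Fin.sum_univ_two, Matrix.smul_apply]
  field_simp
  ring

lemma d_pos {l₁ l₂ η₁ η₂ ρ : ℝ} (hl₁ : 0 < l₁) (hl₂ : 0 < l₂) (hη₁ : 0 < η₁) (hη₂ : 0 < η₂)
    (hρ : ρ ∈ Set.Ioo (-1 : ℝ) 1) :
    0 < η₁^2/(2*l₁) * (η₂^2/(2*l₂)) - (ρ*η₁*η₂/(l₁+l₂))^2 := by
  obtain ⟨h1, h2⟩ := hρ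
  have hρ2 : ρ^2 < 1 := by nlinarith
  have hs : 0 < l₁ + l₂ := by linarith
  have e1 : (ρ*η₁*η₂/(l₁+l₂))^2 = (ρ^2*(η₁^2*η₂^2))/((l₁+l₂)^2) := by
    rw [div_pow]; congr 1; ring
  have e2 : η₁^2/(2*l₁) * (η₂^2/(2*l₂)) = (η₁^2*η₂^2)/(4*(l₁*l₂)) := by
    rw [div_mul_div_comm]; congr 1; ring
  rw [e1, e2, sub_pos]
  rw [div_lt_div_iff₀ (by positivity) (by positivity)]
  have t2 : 4*(l₁*l₂) ≤ (l₁+l₂)^2 := by nlinarith [sq_nonneg (l₁-l₂)]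
  have t1 : 0 < η₁^2*η₂^2 := by positivity
  nlinarith [mul_pos t1 (mul_pos hl₁ hl₂), mul_nonneg t1.le (sub_nonneg.mpr t2),
    mul_pos (mul_pos t1 (mul_pos hl₁ hl₂)) (sub_pos.mpr hρ2)]

lemma gaussPi_eq (l₁ l₂ η₁ η₂ ρ m₁ m₂ : ℝ)
    (hd : η₁^2/(2*l₁) * (η₂^2/(2*l₂)) - (ρ*η₁*η₂/(l₁+l₂))^2 ≠ 0) (q : ℝ × ℝ) :
    gaussPi l₁ l₂ η₁ η₂ ρ m₁ m₂ q
      = ((2*π)⁻¹ * (matA l₁ l₂ η₁ η₂ ρ).det ^ (-(1:ℝ)/2)) *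
        Eaux (-(η₂^2/(2*l₂)) / (2*(η₁^2/(2*l₁) * (η₂^2/(2*l₂)) - (ρ*η₁*η₂/(l₁+l₂))^2)))
             ((ρ*η₁*η₂/(l₁+l₂)) / (η₁^2/(2*l₁) * (η₂^2/(2*l₂)) - (ρ*η₁*η₂/(l₁+l₂))^2))
             (-(η₁^2/(2*l₁)) / (2*(η₁^2/(2*l₁) * (η₂^2/(2*l₂)) - (ρ*η₁*η₂/(l₁+l₂))^2)))
             m₁ m₂ q := by
  unfold gaussPi Eaux
  congr 1
  congr 1
  have h := quad_eq (η₁^2/(2*l₁)) (ρ*η₁*η₂/(l₁+l₂)) (η₂^2/(2*l₂)) (q.1-m₁) (q.2-m₂) hd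
  exact h

set_option maxHeartbeats 1000000 in
lemma main_generic (a2 b2 c2 l₁ l₂ η₁ η₂ ρ m₁ m₂ K : ℝ)
    (hd : a2*c2 - b2^2 ≠ 0)
    (ha : η₁^2 = 2*l₁*a2) (hb : ρ*η₁*η₂ = (l₁+l₂)*b2) (hc : η₂^2 = 2*l₂*c2)
    (G : ℝ × ℝ → ℝ)
    (hG : ∀ q, G q = K * Eaux (-c2/(2*(a2*c2-b2^2))) (b2/(a2*c2-b2^2))
        (-a2/(2*(a2*c2-b2^2))) m₁ m₂ q) :
    ∀ p : ℝ × ℝ,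
      (1/2) * (pd1 (pd1 (fun q => η₁^2 * G q)) p
          + pd1 (pd2 (fun q => ρ*η₁*η₂ * G q)) p
          + pd2 (pd1 (fun q => ρ*η₁*η₂ * G q)) p
          + pd2 (pd2 (fun q => η₂^2 * G q)) p)
        - pd1 (fun q => l₁ * (m₁ - q.1) * G q) p
        - pd2 (fun q => l₂ * (m₂ - q.2) * G q) p = 0 := by
  intro p
  set d := a2*c2 - b2^2 with hdd
  set A := -c2/(2*d) with hA
  set B := b2/d with hB
  set C := -a2/(2*d) with hC
  have hf1 : (fun q => η₁^2 * G q)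
      = fun q : ℝ×ℝ => ((η₁^2*K) + (0:ℝ)*(q.1-m₁) + (0:ℝ)*(q.2-m₂)) * Eaux A B C m₁ m₂ q := by
    funext q; rw [hG q]; ring
  have hf12 : (fun q => ρ*η₁*η₂ * G q)
      = fun q : ℝ×ℝ => ((ρ*η₁*η₂*K) + (0:ℝ)*(q.1-m₁) + (0:ℝ)*(q.2-m₂)) * Eaux A B C m₁ m₂ q := by
    funext q; rw [hG q]; ring
  have hf2 : (fun q => η₂^2 * G q)
      = fun q : ℝ×ℝ => ((η₂^2*K) + (0:ℝ)*(q.1-m₁) + (0:ℝ)*(q.2-m₂)) * Eaux A B C m₁ m₂ q := by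
    funext q; rw [hG q]; ring
  have hg1 : (fun q => l₁ * (m₁ - q.1) * G q)
      = fun q : ℝ×ℝ => ((0:ℝ) + (-(l₁*K))*(q.1-m₁) + (0:ℝ)*(q.2-m₂)) * Eaux A B C m₁ m₂ q := by
    funext q; rw [hG q]; ring
  have hg2 : (fun q => l₂ * (m₂ - q.2) * G q)
      = fun q : ℝ×ℝ => ((0:ℝ) + (0:ℝ)*(q.1-m₁) + (-(l₂*K))*(q.2-m₂)) * Eaux A B C m₁ m₂ q := by
    funext q; rw [hG q]; ring
  have h11 : pd1 (fun q => η₁^2 * G q)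
      = fun q : ℝ×ℝ => ((0:ℝ) + (2*A*(η₁^2*K))*(q.1-m₁) + (B*(η₁^2*K))*(q.2-m₂)) * Eaux A B C m₁ m₂ q := by
    rw [hf1]; funext q; rw [pd1_linexp]; ring
  have h12a : pd1 (fun q => ρ*η₁*η₂ * G q)
      = fun q : ℝ×ℝ => ((0:ℝ) + (2*A*(ρ*η₁*η₂*K))*(q.1-m₁) + (B*(ρ*η₁*η₂*K))*(q.2-m₂)) * Eaux A B C m₁ m₂ q := by
    rw [hf12]; funext q; rw [pd1_linexp]; ring
  have h12b : pd2 (fun q => ρ*η₁*η₂ * G q)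
      = fun q : ℝ×ℝ => ((0:ℝ) + (B*(ρ*η₁*η₂*K))*(q.1-m₁) + (2*C*(ρ*η₁*η₂*K))*(q.2-m₂)) * Eaux A B C m₁ m₂ q := by
    rw [hf12]; funext q; rw [pd2_linexp]; ring
  have h22 : pd2 (fun q => η₂^2 * G q)
      = fun q : ℝ×ℝ => ((0:ℝ) + (B*(η₂^2*K))*(q.1-m₁) + (2*C*(η₂^2*K))*(q.2-m₂)) * Eaux A B C m₁ m₂ q := by
    rw [hf2]; funext q; rw [pd2_linexp]; ring
  rw [h11, h12a, h12b, h22, hg1, hg2]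
  rw [pd1_linexp, pd1_linexp, pd2_linexp, pd2_linexp, pd1_linexp, pd2_linexp]
  rw [hA, hB, hC, hdd, ha, hb, hc]
  have hd' : a2*c2 - b2^2 ≠ 0 := hd
  generalize Eaux (-c2/(2*(a2*c2-b2^2))) (b2/(a2*c2-b2^2)) (-a2/(2*(a2*c2-b2^2))) m₁ m₂ p = E
  have hd'' : c2*a2 - b2^2 ≠ 0 := by rw [mul_comm]; exact hd'
  field_simp [hd', hd'']
  ring

/-- The Gaussian density `Π` with mean `m` and covariance `matA`
solves the stationary Fokker–Planck equation of the 2D OU process: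
`(1/2) Σ_{i,j} ∂²(Σᵢⱼ Π)/∂yᵢ∂yⱼ − Σ_i ∂(λᵢ(mᵢ−yᵢ)Π)/∂yᵢ = 0`. -/
theorem gaussPi_solves_stationary_fokker_planck
    (l₁ l₂ η₁ η₂ ρ m₁ m₂ : ℝ)
    (hl₁ : 0 < l₁) (hl₂ : 0 < l₂) (hη₁ : 0 < η₁) (hη₂ : 0 < η₂)
    (hρ : ρ ∈ Set.Ioo (-1 : ℝ) 1) :
    ∀ p : ℝ × ℝ,
      (1/2) * (pd1 (pd1 (fun q => η₁^2 * gaussPi l₁ l₂ η₁ η₂ ρ m₁ m₂ q)) p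
          + pd1 (pd2 (fun q => ρ*η₁*η₂ * gaussPi l₁ l₂ η₁ η₂ ρ m₁ m₂ q)) p
          + pd2 (pd1 (fun q => ρ*η₁*η₂ * gaussPi l₁ l₂ η₁ η₂ ρ m₁ m₂ q)) p
          + pd2 (pd2 (fun q => η₂^2 * gaussPi l₁ l₂ η₁ η₂ ρ m₁ m₂ q)) p)
        - pd1 (fun q => l₁ * (m₁ - q.1) * gaussPi l₁ l₂ η₁ η₂ ρ m₁ m₂ q) p
        - pd2 (fun q => l₂ * (m₂ - q.2) * gaussPi l₁ l₂ η₁ η₂ ρ m₁ m₂ q) p = 0 := by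
  have hdpos := d_pos hl₁ hl₂ hη₁ hη₂ hρ
  have hd := hdpos.ne'
  have hs : l₁ + l₂ ≠ 0 := by positivity
  have ha : η₁^2 = 2*l₁*(η₁^2/(2*l₁)) := by field_simp
  have hb : ρ*η₁*η₂ = (l₁+l₂)*(ρ*η₁*η₂/(l₁+l₂)) := by field_simp
  have hc : η₂^2 = 2*l₂*(η₂^2/(2*l₂)) := by field_simp
  exact main_generic (η₁^2/(2*l₁)) (ρ*η₁*η₂/(l₁+l₂)) (η₂^2/(2*l₂)) l₁ l₂ η₁ η₂ ρ m₁ m₂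
    ((2*π)⁻¹ * (matA l₁ l₂ η₁ η₂ ρ).det ^ (-(1:ℝ)/2)) hd ha hb hc
    (gaussPi l₁ l₂ η₁ η₂ ρ m₁ m₂) (fun q => gaussPi_eq l₁ l₂ η₁ η₂ ρ m₁ m₂ hd q)

end
end

section
/- (Energy/coercivity estimate for the OU generator.) Assume 0 ≤ ρ < 1. For every e ∈ C²(ℝ²) such that e and all its partial derivatives up to order 2 are at most polynomially growing, −∫_{ℝ²} e(y) (Le)(y) Π(y) dy ≥ (1/2) min(η₁², η₂²)(1−ρ) ∫_{ℝ²} |∇e(y)|² Π(y) dy. -/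
open MeasureTheory Real Filter Matrix Topology Nat

noncomputable section

lemma aux_pow_le_exp (x : ℝ) (hx : 0 ≤ x) (k : ℕ) : x ^ k ≤ k ! * Real.exp x := by
  have h := Real.sum_le_exp_of_nonneg hx (k+1)
  have h2 : x ^ k / k ! ≤ ∑ i ∈ Finset.range (k+1), x ^ i / i ! := by
    apply Finset.single_le_sum (f := fun i => x ^ i / i !) (fun i _ => by positivity)
    simp
  have hk : (0:ℝ) < k ! := by positivity
  rw [div_le_iff₀ hk] at h2
  calc x ^ k ≤ (∑ i ∈ Finset.range (k+1), x ^ i / i !) * k ! := h2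
    _ ≤ Real.exp x * k ! := by
        apply mul_le_mul_of_nonneg_right h hk.le
    _ = k ! * Real.exp x := mul_comm _ _

lemma aux_ftc_zero (g g' : ℝ → ℝ) (hd : ∀ x, HasDerivAt g (g' x) x)
    (hi : Integrable g') (ht : Tendsto g atTop (𝓝 0)) (hb : Tendsto g atBot (𝓝 0)) :
    ∫ x, g' x = 0 := by
  have h1 : ∫ x in Set.Iic (0:ℝ), g' x = g 0 - 0 :=
    integral_Iic_of_hasDerivAt_of_tendsto (hd 0).continuousAt.continuousWithinAt
      (fun x _ => hd x) hi.integrableOn hb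
  have h2 : ∫ x in Set.Ioi (0:ℝ), g' x = 0 - g 0 :=
    integral_Ioi_of_hasDerivAt_of_tendsto (hd 0).continuousAt.continuousWithinAt
      (fun x _ => hd x) hi.integrableOn ht
  have := intervalIntegral.integral_Iic_add_Ioi (b := (0:ℝ)) (f := g')
    hi.integrableOn hi.integrableOn
  rw [← this, h1, h2]; ring

/-- pointwise bound of polynomial-times-gaussian by a wider gaussian -/
lemma aux_psi_pointwise (α : ℝ) (hα : 0 < α) (n : ℕ) (x : ℝ) :
    (1 + |x| ^ n) * Real.exp (-x^2 / (4*α)) ≤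
      (2 + n ! * (8*α)^n) * Real.exp (-x^2 / (8*α)) := by
  have hx2 : |x| ^ n ≤ 1 + (x^2) ^ n := by
    rcases le_total |x| 1 with h | h
    · have : |x| ^ n ≤ 1 := pow_le_one₀ (abs_nonneg x) h
      linarith [pow_nonneg (sq_nonneg x) n]
    · have h1 : |x| ≤ x ^ 2 := by nlinarith [abs_nonneg x, sq_abs x]
      have := pow_le_pow_left₀ (abs_nonneg x) h1 n
      linarith [this]
  have hp : (x^2) ^ n ≤ n ! * (8*α)^n * Real.exp (x^2/(8*α)) := by
    have h8 : (0:ℝ) < 8*α := by linarith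
    have := aux_pow_le_exp (x^2/(8*α)) (by positivity) n
    have h2 : (x^2/(8*α))^n = (x^2)^n / (8*α)^n := div_pow _ _ _
    rw [h2, div_le_iff₀ (by positivity)] at this
    calc (x^2)^n ≤ ↑n ! * Real.exp (x^2/(8*α)) * (8*α)^n := this
      _ = n ! * (8*α)^n * Real.exp (x^2/(8*α)) := by ring
  have he2 : Real.exp (x^2/(8*α)) * Real.exp (-x^2 / (4*α)) = Real.exp (-x^2/(8*α)) := by
    rw [← Real.exp_add]; ring_nf
  have hEE' : Real.exp (-x^2/(4*α)) ≤ Real.exp (-x^2/(8*α)) := by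
    apply Real.exp_le_exp.mpr
    rw [div_le_div_iff₀ (by positivity) (by positivity)]
    nlinarith [sq_nonneg x, hα.le]
  have hM : (0:ℝ) ≤ n ! * (8*α)^n := by positivity
  calc (1 + |x| ^ n) * Real.exp (-x^2 / (4*α))
      ≤ (2 + n ! * (8*α)^n * Real.exp (x^2/(8*α))) * Real.exp (-x^2 / (4*α)) := by
        have h3 : (1:ℝ) ≤ Real.exp (x^2/(8*α)) := Real.one_le_exp (by positivity)
        apply mul_le_mul_of_nonneg_right _ (Real.exp_pos _).le
        nlinarith [hx2, hp, pow_nonneg (sq_nonneg x) n]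
    _ = 2 * Real.exp (-x^2/(4*α)) + n ! * (8*α)^n * (Real.exp (x^2/(8*α)) * Real.exp (-x^2/(4*α))) := by ring
    _ = 2 * Real.exp (-x^2/(4*α)) + n ! * (8*α)^n * Real.exp (-x^2/(8*α)) := by rw [he2]
    _ ≤ 2 * Real.exp (-x^2/(8*α)) + n ! * (8*α)^n * Real.exp (-x^2/(8*α)) := by nlinarith [hEE']
    _ = (2 + n ! * (8*α)^n) * Real.exp (-x^2/(8*α)) := by ring

lemma aux_psi_integrable (α m : ℝ) (hα : 0 < α) (n : ℕ) :
    Integrable (fun x : ℝ => (1 + |x - m| ^ n) * Real.exp (-(x-m)^2 / (4*α))) := by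
  have h : Integrable (fun x : ℝ => (1 + |x| ^ n) * Real.exp (-x^2 / (4*α))) := by
    have hint : Integrable (fun x : ℝ => (2 + n ! * (8*α)^n) * Real.exp (-(1/(8*α)) * x^2)) :=
      (integrable_exp_neg_mul_sq (by positivity)).const_mul _
    apply hint.mono'
    · apply Continuous.aestronglyMeasurable
      continuity
    · apply Filter.Eventually.of_forall
      intro x
      rw [Real.norm_eq_abs, abs_of_nonneg (by positivity)]
      have := aux_psi_pointwise α hα n x
      have heq : -x^2/(8*α) = -(1/(8*α)) * x^2 := by ring
      rw [heq] at this; exact this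
  exact h.comp_sub_right m

lemma aux_psi_tendsto_top (α m : ℝ) (hα : 0 < α) (n : ℕ) :
    Tendsto (fun x : ℝ => (1 + |x - m| ^ n) * Real.exp (-(x-m)^2 / (4*α))) atTop (𝓝 0) := by
  have h : Tendsto (fun x : ℝ => (1 + |x| ^ n) * Real.exp (-x^2 / (4*α))) (cocompact ℝ) (𝓝 0) := by
    have h1 : Tendsto (fun x : ℝ => |x| ^ (n:ℝ) * Real.exp (-(1/(4*α)) * x^2)) (cocompact ℝ) (𝓝 0) :=
      tendsto_rpow_abs_mul_exp_neg_mul_sq_cocompact (by positivity) n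
    have h0 : Tendsto (fun x : ℝ => |x| ^ (0:ℝ) * Real.exp (-(1/(4*α)) * x^2)) (cocompact ℝ) (𝓝 0) :=
      tendsto_rpow_abs_mul_exp_neg_mul_sq_cocompact (by positivity) 0
    have := h0.add h1
    rw [add_zero] at this
    apply this.congr'
    filter_upwards [(isCompact_singleton (x := (0:ℝ))).compl_mem_cocompact] with x hx
    have hx0 : x ≠ 0 := by simpa using hx
    rw [Real.rpow_natCast, Real.rpow_zero]
    have : -x^2/(4*α) = -(1/(4*α)) * x^2 := by ring
    rw [this]; ring
  have h2 : Tendsto (fun x : ℝ => x - m) atTop (cocompact ℝ) :=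
    (tendsto_atTop_add_const_right atTop (-m) tendsto_id).mono_right _root_.atTop_le_cocompact
  exact h.comp h2

lemma aux_psi_tendsto_bot (α m : ℝ) (hα : 0 < α) (n : ℕ) :
    Tendsto (fun x : ℝ => (1 + |x - m| ^ n) * Real.exp (-(x-m)^2 / (4*α))) atBot (𝓝 0) := by
  have h : Tendsto (fun x : ℝ => (1 + |x| ^ n) * Real.exp (-x^2 / (4*α))) (cocompact ℝ) (𝓝 0) := by
    have h1 : Tendsto (fun x : ℝ => |x| ^ (n:ℝ) * Real.exp (-(1/(4*α)) * x^2)) (cocompact ℝ) (𝓝 0) :=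
      tendsto_rpow_abs_mul_exp_neg_mul_sq_cocompact (by positivity) n
    have h0 : Tendsto (fun x : ℝ => |x| ^ (0:ℝ) * Real.exp (-(1/(4*α)) * x^2)) (cocompact ℝ) (𝓝 0) :=
      tendsto_rpow_abs_mul_exp_neg_mul_sq_cocompact (by positivity) 0
    have := h0.add h1
    rw [add_zero] at this
    apply this.congr'
    filter_upwards [(isCompact_singleton (x := (0:ℝ))).compl_mem_cocompact] with x hx
    have hx0 : x ≠ 0 := by simpa using hx
    rw [Real.rpow_natCast, Real.rpow_zero]
    have : -x^2/(4*α) = -(1/(4*α)) * x^2 := by ring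
    rw [this]; ring
  have h2 : Tendsto (fun x : ℝ => x - m) atBot (cocompact ℝ) :=
    (tendsto_atBot_add_const_right atBot (-m) tendsto_id).mono_right _root_.atBot_le_cocompact
  exact h.comp h2





lemma aux_pow_le_succ (x : ℝ) (hx : 0 ≤ x) {n m : ℕ} (h : n ≤ m) : x ^ n ≤ 1 + x ^ m := by
  rcases le_total x 1 with hx1 | hx1
  · have : x ^ n ≤ 1 := pow_le_one₀ hx hx1
    have := pow_nonneg hx m
    linarith
  · have : x ^ n ≤ x ^ m := pow_le_pow_right₀ hx1 h
    linarith

lemma aux_pg_of_le {f : ℝ × ℝ → ℝ} (C : ℝ) (n : ℕ)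
    (h : ∀ p, |f p| ≤ C * (1 + ‖p‖ ^ n)) : PolyGrowth f := by
  refine ⟨2*(|C|+1), by positivity, n+1, Nat.succ_pos _, fun p => ?_⟩
  have h1 := h p
  have h2 : ‖p‖ ^ n ≤ 1 + ‖p‖ ^ (n+1) := aux_pow_le_succ _ (norm_nonneg p) (Nat.le_succ n)
  have h3 : C ≤ |C| := le_abs_self C
  have h4 : (0:ℝ) ≤ ‖p‖ ^ (n+1) := pow_nonneg (norm_nonneg p) _
  have h5 : (0:ℝ) ≤ 1 + ‖p‖ ^ n := by positivity
  nlinarith [abs_nonneg C, mul_le_mul_of_nonneg_right h3 h5]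

lemma aux_pg_mul {f g : ℝ × ℝ → ℝ} (hf : PolyGrowth f) (hg : PolyGrowth g) :
    PolyGrowth (fun p => f p * g p) := by
  obtain ⟨C₁, hC₁, n₁, -, h₁⟩ := hf
  obtain ⟨C₂, hC₂, n₂, -, h₂⟩ := hg
  apply aux_pg_of_le (3*(C₁*C₂)) (n₁+n₂)
  intro p
  set x := ‖p‖ with hx
  have hx0 : (0:ℝ) ≤ x := norm_nonneg p
  have e1 : x ^ n₁ ≤ 1 + x ^ (n₁+n₂) := aux_pow_le_succ _ hx0 (Nat.le_add_right _ _)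
  have e2 : x ^ n₂ ≤ 1 + x ^ (n₁+n₂) := aux_pow_le_succ _ hx0 (Nat.le_add_left _ _)
  have e3 : x ^ n₁ * x ^ n₂ = x ^ (n₁+n₂) := (pow_add x n₁ n₂).symm
  rw [abs_mul]
  calc |f p| * |g p| ≤ (C₁ * (1 + x ^ n₁)) * (C₂ * (1 + x ^ n₂)) := by
        apply mul_le_mul (h₁ p) (h₂ p) (abs_nonneg _) (by positivity)
    _ ≤ 3*(C₁*C₂) * (1 + x ^ (n₁+n₂)) := by
        nlinarith [pow_nonneg hx0 n₁, pow_nonneg hx0 n₂, pow_nonneg hx0 (n₁+n₂),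
          mul_pos hC₁ hC₂]

lemma aux_pg_add {f g : ℝ × ℝ → ℝ} (hf : PolyGrowth f) (hg : PolyGrowth g) :
    PolyGrowth (fun p => f p + g p) := by
  obtain ⟨C₁, hC₁, n₁, -, h₁⟩ := hf
  obtain ⟨C₂, hC₂, n₂, -, h₂⟩ := hg
  apply aux_pg_of_le (2*(C₁+C₂)) (max n₁ n₂)
  intro p
  set x := ‖p‖ with hx
  have hx0 : (0:ℝ) ≤ x := norm_nonneg p
  have e1 : x ^ n₁ ≤ 1 + x ^ (max n₁ n₂) := aux_pow_le_succ _ hx0 (le_max_left _ _)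
  have e2 : x ^ n₂ ≤ 1 + x ^ (max n₁ n₂) := aux_pow_le_succ _ hx0 (le_max_right _ _)
  have h3 := (abs_add_le (f p) (g p)).trans (add_le_add (h₁ p) (h₂ p))
  nlinarith [pow_nonneg hx0 (max n₁ n₂)]

lemma aux_pg_neg {f : ℝ × ℝ → ℝ} (hf : PolyGrowth f) : PolyGrowth (fun p => -f p) := by
  obtain ⟨C, hC, n, hn, h⟩ := hf
  exact ⟨C, hC, n, hn, fun p => by rw [abs_neg]; exact h p⟩

lemma aux_pg_sub {f g : ℝ × ℝ → ℝ} (hf : PolyGrowth f) (hg : PolyGrowth g) :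
    PolyGrowth (fun p => f p - g p) := by
  have := aux_pg_add hf (aux_pg_neg hg)
  simpa [sub_eq_add_neg] using this

lemma aux_pg_const (c : ℝ) : PolyGrowth (fun _ : ℝ × ℝ => c) := by
  apply aux_pg_of_le |c| 1
  intro p
  have : (0:ℝ) ≤ ‖p‖ := norm_nonneg p
  nlinarith [abs_nonneg c]

lemma aux_pg_fst : PolyGrowth (fun p : ℝ × ℝ => p.1) := by
  apply aux_pg_of_le 1 1
  intro p
  have h1 : |p.1| ≤ ‖p‖ := by
    rw [← Real.norm_eq_abs]; exact norm_fst_le p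
  simp only [pow_one, one_mul]
  linarith
lemma aux_pg_snd : PolyGrowth (fun p : ℝ × ℝ => p.2) := by
  apply aux_pg_of_le 1 1
  intro p
  have h1 : |p.2| ≤ ‖p‖ := by
    rw [← Real.norm_eq_abs]; exact norm_snd_le p
  simp only [pow_one, one_mul]
  linarith

lemma aux_pg_z1 (m₁ : ℝ) : PolyGrowth (fun p : ℝ × ℝ => p.1 - m₁) :=
  aux_pg_sub aux_pg_fst (aux_pg_const m₁)
lemma aux_pg_z2 (m₂ : ℝ) : PolyGrowth (fun p : ℝ × ℝ => p.2 - m₂) :=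
  aux_pg_sub aux_pg_snd (aux_pg_const m₂)

lemma aux_tri_pow (x y z : ℝ) (hx : 0 ≤ x) (hy : 0 ≤ y) (hz : 0 ≤ z) (n : ℕ) :
    (x + y + z) ^ n ≤ 3 ^ n * (x ^ n + y ^ n + z ^ n) := by
  set M := max x (max y z) with hM
  have h1 : x + y + z ≤ 3 * M := by
    have := le_max_left x (max y z)
    have := (le_max_left y z).trans (le_max_right x (max y z))
    have := (le_max_right y z).trans (le_max_right x (max y z))
    simp only [hM]; linarith
  have h2 : (x+y+z)^n ≤ (3*M)^n :=
    pow_le_pow_left₀ (by linarith) h1 n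
  have h3 : M ^ n ≤ x ^ n + y ^ n + z ^ n := by
    rcases max_choice x (max y z) with h | h
    · rw [hM, h]; nlinarith [pow_nonneg hy n, pow_nonneg hz n]
    · rcases max_choice y z with h' | h'
      · rw [hM, h, h']; nlinarith [pow_nonneg hx n, pow_nonneg hz n]
      · rw [hM, h, h']; nlinarith [pow_nonneg hx n, pow_nonneg hy n]
  calc (x+y+z)^n ≤ (3*M)^n := h2
    _ = 3^n * M^n := mul_pow 3 M n
    _ ≤ 3^n * (x^n+y^n+z^n) := by
        apply mul_le_mul_of_nonneg_left h3 (by positivity)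



def auxQW (a b c m₁ m₂ : ℝ) (p : ℝ × ℝ) : ℝ :=
  Real.exp (-(1/2) * ((b*(p.1-m₁)^2 - 2*c*(p.1-m₁)*(p.2-m₂) + a*(p.2-m₂)^2)/(a*b-c^2)))

def auxL1 (a b c m₁ m₂ : ℝ) (p : ℝ × ℝ) : ℝ :=
  (c*(p.2-m₂) - b*(p.1-m₁)) * (a*b-c^2)⁻¹

def auxL2 (a b c m₁ m₂ : ℝ) (p : ℝ × ℝ) : ℝ :=
  (c*(p.1-m₁) - a*(p.2-m₂)) * (a*b-c^2)⁻¹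

variable {a b c m₁ m₂ : ℝ}

lemma auxQW_pos (p : ℝ × ℝ) : 0 < auxQW a b c m₁ m₂ p := Real.exp_pos _

lemma auxQW_cont : Continuous (auxQW a b c m₁ m₂) := by
  unfold auxQW; fun_prop

lemma auxL1_cont : Continuous (auxL1 a b c m₁ m₂) := by
  unfold auxL1; fun_prop
lemma auxL2_cont : Continuous (auxL2 a b c m₁ m₂) := by
  unfold auxL2; fun_prop

lemma auxL1_pg : PolyGrowth (auxL1 a b c m₁ m₂) := by
  unfold auxL1
  exact aux_pg_mul (aux_pg_sub (aux_pg_mul (aux_pg_const c) (aux_pg_z2 m₂))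
    (aux_pg_mul (aux_pg_const b) (aux_pg_z1 m₁))) (aux_pg_const _)
lemma auxL2_pg : PolyGrowth (auxL2 a b c m₁ m₂) := by
  unfold auxL2
  exact aux_pg_mul (aux_pg_sub (aux_pg_mul (aux_pg_const c) (aux_pg_z1 m₁))
    (aux_pg_mul (aux_pg_const a) (aux_pg_z2 m₂))) (aux_pg_const _)

lemma auxQW_hasDeriv1 (p : ℝ × ℝ) :
    HasDerivAt (fun x => auxQW a b c m₁ m₂ (x, p.2))
      (auxL1 a b c m₁ m₂ p * auxQW a b c m₁ m₂ p) p.1 := by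
  have h1 : HasDerivAt (fun x : ℝ => x - m₁) 1 p.1 := (hasDerivAt_id _).sub_const _
  have h2 : HasDerivAt (fun x : ℝ => (x-m₁)^2) ((2:ℕ) * (p.1-m₁)^(2-1) * 1) p.1 := h1.pow 2
  have h3 : HasDerivAt (fun x : ℝ => 2*c*(x-m₁)*(p.2-m₂)) ((2*c*1)*(p.2-m₂)) p.1 :=
    (h1.const_mul (2*c)).mul_const _
  have h4 : HasDerivAt (fun x : ℝ => b*(x-m₁)^2) (b * ((2:ℕ) * (p.1-m₁)^(2-1) * 1)) p.1 :=
    h2.const_mul b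
  have h5 := ((h4.sub h3).add_const (a*(p.2-m₂)^2)).div_const (a*b-c^2)
  have h6 := (h5.const_mul (-(1/2))).exp
  convert h6 using 1
  · rfl
  · unfold auxQW auxL1
    simp only [Pi.sub_apply, Pi.add_apply]
    ring

lemma auxQW_hasDeriv2 (p : ℝ × ℝ) :
    HasDerivAt (fun y => auxQW a b c m₁ m₂ (p.1, y))
      (auxL2 a b c m₁ m₂ p * auxQW a b c m₁ m₂ p) p.2 := by
  have h1 : HasDerivAt (fun y : ℝ => y - m₂) 1 p.2 := (hasDerivAt_id _).sub_const _
  have h2 : HasDerivAt (fun y : ℝ => (y-m₂)^2) ((2:ℕ) * (p.2-m₂)^(2-1) * 1) p.2 := h1.pow 2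
  have h3 : HasDerivAt (fun y : ℝ => 2*c*(p.1-m₁)*(y-m₂)) (2*c*(p.1-m₁)*1) p.2 :=
    h1.const_mul (2*c*(p.1-m₁))
  have h4 : HasDerivAt (fun y : ℝ => a*(y-m₂)^2) (a * ((2:ℕ) * (p.2-m₂)^(2-1) * 1)) p.2 :=
    h2.const_mul a
  have h5 := (((hasDerivAt_const p.2 (b*(p.1-m₁)^2)).sub h3).add h4).div_const (a*b-c^2)
  have h6 := (h5.const_mul (-(1/2))).exp
  convert h6 using 1
  · rfl
  · unfold auxQW auxL2
    simp only [Pi.sub_apply, Pi.add_apply]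
    ring

lemma auxL1_hasDeriv1 (p : ℝ × ℝ) :
    HasDerivAt (fun x => auxL1 a b c m₁ m₂ (x, p.2)) (-b * (a*b-c^2)⁻¹) p.1 := by
  have h1 : HasDerivAt (fun x : ℝ => x - m₁) 1 p.1 := (hasDerivAt_id _).sub_const _
  have h2 := (((hasDerivAt_const p.1 (c*(p.2-m₂))).sub (h1.const_mul b)).mul_const
    ((a*b-c^2)⁻¹))
  exact h2.congr_deriv (by ring)

lemma auxL1_hasDeriv2 (p : ℝ × ℝ) :
    HasDerivAt (fun y => auxL1 a b c m₁ m₂ (p.1, y)) (c * (a*b-c^2)⁻¹) p.2 := by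
  have h1 : HasDerivAt (fun y : ℝ => y - m₂) 1 p.2 := (hasDerivAt_id _).sub_const _
  have h2 := (((h1.const_mul c).sub (hasDerivAt_const p.2 (b*(p.1-m₁)))).mul_const
    ((a*b-c^2)⁻¹))
  exact h2.congr_deriv (by ring)

lemma auxL2_hasDeriv1 (p : ℝ × ℝ) :
    HasDerivAt (fun x => auxL2 a b c m₁ m₂ (x, p.2)) (c * (a*b-c^2)⁻¹) p.1 := by
  have h1 : HasDerivAt (fun x : ℝ => x - m₁) 1 p.1 := (hasDerivAt_id _).sub_const _
  have h2 := (((h1.const_mul c).sub (hasDerivAt_const p.1 (a*(p.2-m₂)))).mul_const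
    ((a*b-c^2)⁻¹))
  exact h2.congr_deriv (by ring)

lemma auxL2_hasDeriv2 (p : ℝ × ℝ) :
    HasDerivAt (fun y => auxL2 a b c m₁ m₂ (p.1, y)) (-a * (a*b-c^2)⁻¹) p.2 := by
  have h1 : HasDerivAt (fun y : ℝ => y - m₂) 1 p.2 := (hasDerivAt_id _).sub_const _
  have h2 := (((hasDerivAt_const p.2 (c*(p.1-m₁))).sub (h1.const_mul a)).mul_const
    ((a*b-c^2)⁻¹))
  exact h2.congr_deriv (by ring)

lemma auxQW_le (ha : 0 < a) (hb : 0 < b) (hd : 0 < a*b-c^2) (p : ℝ × ℝ) :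
    auxQW a b c m₁ m₂ p ≤
      Real.exp (-(p.1-m₁)^2/(4*a)) * Real.exp (-(p.2-m₂)^2/(4*b)) := by
  set z₁ := p.1 - m₁
  set z₂ := p.2 - m₂
  rw [← Real.exp_add]
  apply Real.exp_le_exp.mpr
  have key : z₁^2/(2*a) + z₂^2/(2*b) ≤ (b*z₁^2 - 2*c*z₁*z₂ + a*z₂^2)/(a*b-c^2) := by
    rw [div_add_div _ _ (by positivity : (2*a) ≠ 0) (by positivity : (2*b) ≠ 0),
      div_le_div_iff₀ (by positivity) hd]
    nlinarith [mul_nonneg ha.le (sq_nonneg (c*z₂ - b*z₁)),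
      mul_nonneg hb.le (sq_nonneg (c*z₁ - a*z₂))]
  have e1 : -z₁^2/(4*a) = -(z₁^2/(2*a))/2 := by ring
  have e2 : -z₂^2/(4*b) = -(z₂^2/(2*b))/2 := by ring
  rw [e1, e2]
  linarith

lemma aux_growth_bound (ha : 0 < a) (hb : 0 < b) (hd : 0 < a*b-c^2)
    {f : ℝ × ℝ → ℝ} (hf : PolyGrowth f) :
    ∃ C : ℝ, ∃ n : ℕ, 0 < C ∧ ∀ p : ℝ × ℝ, |f p * auxQW a b c m₁ m₂ p| ≤
      C * ((1 + |p.1-m₁|^n) * Real.exp (-(p.1-m₁)^2/(4*a)) *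
        ((1 + |p.2-m₂|^n) * Real.exp (-(p.2-m₂)^2/(4*b)))) := by
  obtain ⟨C₀, hC₀, n, hn, hbd⟩ := hf
  set R := |m₁| + |m₂| with hR
  have hR0 : 0 ≤ R := by positivity
  refine ⟨C₀ * (2 * 3^n * (1 + R^n)), n, by positivity, fun p => ?_⟩
  set z₁ := p.1 - m₁ with hz₁
  set z₂ := p.2 - m₂ with hz₂
  have hkey : 1 + ‖p‖^n ≤ 2 * 3^n * (1 + R^n) * ((1 + |z₁|^n) * (1 + |z₂|^n)) := by
    have hnp : ‖p‖ ≤ |z₁| + |z₂| + R := by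
      have e1 : |p.1| ≤ |z₁| + |m₁| := by
        have : p.1 = z₁ + m₁ := by rw [hz₁]; ring
        rw [this]; exact abs_add_le _ _
      have e2 : |p.2| ≤ |z₂| + |m₂| := by
        have : p.2 = z₂ + m₂ := by rw [hz₂]; ring
        rw [this]; exact abs_add_le _ _
      have : ‖p‖ = max ‖p.1‖ ‖p.2‖ := rfl
      rw [this, Real.norm_eq_abs, Real.norm_eq_abs]
      apply max_le
      · have := abs_nonneg z₂; linarith [abs_nonneg m₂]
      · have := abs_nonneg z₁; linarith [abs_nonneg m₁]
    have h1 : ‖p‖^n ≤ (|z₁| + |z₂| + R)^n :=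
      pow_le_pow_left₀ (norm_nonneg p) hnp n
    have h2 := aux_tri_pow |z₁| |z₂| R (abs_nonneg _) (abs_nonneg _) hR0 n
    have h3 : (1:ℝ) ≤ 3^n := one_le_pow₀ (by norm_num)
    nlinarith [pow_nonneg (abs_nonneg z₁) n, pow_nonneg (abs_nonneg z₂) n,
      pow_nonneg hR0 n, mul_nonneg (pow_nonneg (abs_nonneg z₁) n) (pow_nonneg (abs_nonneg z₂) n),
      mul_nonneg (pow_nonneg hR0 n) (mul_nonneg (pow_nonneg (abs_nonneg z₁) n) (pow_nonneg (abs_nonneg z₂) n)),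
      mul_nonneg (pow_nonneg hR0 n) (pow_nonneg (abs_nonneg z₁) n),
      mul_nonneg (pow_nonneg hR0 n) (pow_nonneg (abs_nonneg z₂) n)]
  have hQ := auxQW_le (m₁ := m₁) (m₂ := m₂) ha hb hd p
  have hQ0 := (auxQW_pos (a := a) (b := b) (c := c) (m₁ := m₁) (m₂ := m₂) p).le
  rw [abs_mul, abs_of_nonneg hQ0]
  calc |f p| * auxQW a b c m₁ m₂ p
      ≤ (C₀ * (1 + ‖p‖^n)) * (Real.exp (-z₁^2/(4*a)) * Real.exp (-z₂^2/(4*b))) := by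
        apply mul_le_mul (hbd p) hQ hQ0 (by positivity)
    _ ≤ (C₀ * (2 * 3^n * (1 + R^n) * ((1 + |z₁|^n) * (1 + |z₂|^n)))) *
          (Real.exp (-z₁^2/(4*a)) * Real.exp (-z₂^2/(4*b))) := by
        apply mul_le_mul_of_nonneg_right _ (by positivity)
        exact mul_le_mul_of_nonneg_left hkey hC₀.le
    _ = C₀ * (2 * 3^n * (1 + R^n)) * ((1 + |z₁|^n) * Real.exp (-z₁^2/(4*a)) *
          ((1 + |z₂|^n) * Real.exp (-z₂^2/(4*b)))) := by ring

lemma aux_int_QW (ha : 0 < a) (hb : 0 < b) (hd : 0 < a*b-c^2)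
    {f : ℝ × ℝ → ℝ} (hfc : Continuous f) (hf : PolyGrowth f) :
    Integrable (fun p : ℝ × ℝ => f p * auxQW a b c m₁ m₂ p) := by
  obtain ⟨C, n, hC, hbd⟩ := aux_growth_bound ha hb hd hf (m₁ := m₁) (m₂ := m₂)
  have I1 : Integrable (fun x : ℝ => (1 + |x - m₁|^n) * Real.exp (-(x-m₁)^2/(4*a))) :=
    aux_psi_integrable a m₁ ha n
  have I2 : Integrable (fun x : ℝ => (1 + |x - m₂|^n) * Real.exp (-(x-m₂)^2/(4*b))) :=
    aux_psi_integrable b m₂ hb n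
  have I12 : Integrable (fun p : ℝ × ℝ =>
      ((1 + |p.1 - m₁|^n) * Real.exp (-(p.1-m₁)^2/(4*a))) *
      ((1 + |p.2 - m₂|^n) * Real.exp (-(p.2-m₂)^2/(4*b)))) := by
    have := I1.mul_prod I2
    rwa [← Measure.volume_eq_prod] at this
  apply (I12.const_mul C).mono'
  · exact (hfc.mul auxQW_cont).aestronglyMeasurable
  · apply Filter.Eventually.of_forall
    intro p
    rw [Real.norm_eq_abs]
    have := hbd p
    calc |f p * auxQW a b c m₁ m₂ p| ≤ _ := this
      _ = C * ((1 + |p.1 - m₁|^n) * Real.exp (-(p.1-m₁)^2/(4*a)) *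
          ((1 + |p.2 - m₂|^n) * Real.exp (-(p.2-m₂)^2/(4*b)))) := rfl

lemma aux_slice_int1 (ha : 0 < a) (hb : 0 < b) (hd : 0 < a*b-c^2)
    {f : ℝ × ℝ → ℝ} (hfc : Continuous f) (hf : PolyGrowth f) (y : ℝ) :
    Integrable (fun x : ℝ => f (x, y) * auxQW a b c m₁ m₂ (x, y)) := by
  obtain ⟨C, n, hC, hbd⟩ := aux_growth_bound ha hb hd hf (m₁ := m₁) (m₂ := m₂)
  have I1 : Integrable (fun x : ℝ => (1 + |x - m₁|^n) * Real.exp (-(x-m₁)^2/(4*a))) :=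
    aux_psi_integrable a m₁ ha n
  apply (I1.const_mul (C * ((1 + |y - m₂|^n) * Real.exp (-(y-m₂)^2/(4*b))))).mono'
  · exact ((hfc.comp (by fun_prop)).mul (auxQW_cont.comp (by fun_prop))).aestronglyMeasurable
  · apply Filter.Eventually.of_forall
    intro x
    rw [Real.norm_eq_abs]
    have := hbd (x, y)
    calc |f (x,y) * auxQW a b c m₁ m₂ (x,y)| ≤ _ := this
      _ = C * ((1 + |y - m₂|^n) * Real.exp (-(y-m₂)^2/(4*b))) *
          ((1 + |x - m₁|^n) * Real.exp (-(x-m₁)^2/(4*a))) := by ring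

lemma aux_slice_int2 (ha : 0 < a) (hb : 0 < b) (hd : 0 < a*b-c^2)
    {f : ℝ × ℝ → ℝ} (hfc : Continuous f) (hf : PolyGrowth f) (x : ℝ) :
    Integrable (fun y : ℝ => f (x, y) * auxQW a b c m₁ m₂ (x, y)) := by
  obtain ⟨C, n, hC, hbd⟩ := aux_growth_bound ha hb hd hf (m₁ := m₁) (m₂ := m₂)
  have I2 : Integrable (fun y : ℝ => (1 + |y - m₂|^n) * Real.exp (-(y-m₂)^2/(4*b))) :=
    aux_psi_integrable b m₂ hb n
  apply (I2.const_mul (C * ((1 + |x - m₁|^n) * Real.exp (-(x-m₁)^2/(4*a))))).mono'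
  · exact ((hfc.comp (by fun_prop)).mul (auxQW_cont.comp (by fun_prop))).aestronglyMeasurable
  · apply Filter.Eventually.of_forall
    intro y
    rw [Real.norm_eq_abs]
    have := hbd (x, y)
    calc |f (x,y) * auxQW a b c m₁ m₂ (x,y)| ≤ _ := this
      _ = C * ((1 + |x - m₁|^n) * Real.exp (-(x-m₁)^2/(4*a))) *
          ((1 + |y - m₂|^n) * Real.exp (-(y-m₂)^2/(4*b))) := by ring

lemma aux_slice_tend1 (ha : 0 < a) (hb : 0 < b) (hd : 0 < a*b-c^2)
    {f : ℝ × ℝ → ℝ} (hf : PolyGrowth f) (y : ℝ) :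
    Tendsto (fun x : ℝ => f (x, y) * auxQW a b c m₁ m₂ (x, y)) atTop (𝓝 0) ∧
    Tendsto (fun x : ℝ => f (x, y) * auxQW a b c m₁ m₂ (x, y)) atBot (𝓝 0) := by
  obtain ⟨C, n, hC, hbd⟩ := aux_growth_bound ha hb hd hf (m₁ := m₁) (m₂ := m₂)
  set D := C * ((1 + |y - m₂|^n) * Real.exp (-(y-m₂)^2/(4*b))) with hD
  have hnorm : ∀ x : ℝ, ‖f (x, y) * auxQW a b c m₁ m₂ (x, y)‖ ≤
      D * ((1 + |x - m₁|^n) * Real.exp (-(x-m₁)^2/(4*a))) := by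
    intro x
    rw [Real.norm_eq_abs]
    calc |f (x,y) * auxQW a b c m₁ m₂ (x,y)| ≤ _ := hbd (x, y)
      _ = D * ((1 + |x - m₁|^n) * Real.exp (-(x-m₁)^2/(4*a))) := by rw [hD]; ring
  constructor
  · apply squeeze_zero_norm hnorm
    have := (aux_psi_tendsto_top a m₁ ha n).const_mul D
    simpa using this
  · apply squeeze_zero_norm hnorm
    have := (aux_psi_tendsto_bot a m₁ ha n).const_mul D
    simpa using this

lemma aux_slice_tend2 (ha : 0 < a) (hb : 0 < b) (hd : 0 < a*b-c^2)
    {f : ℝ × ℝ → ℝ} (hf : PolyGrowth f) (x : ℝ) :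
    Tendsto (fun y : ℝ => f (x, y) * auxQW a b c m₁ m₂ (x, y)) atTop (𝓝 0) ∧
    Tendsto (fun y : ℝ => f (x, y) * auxQW a b c m₁ m₂ (x, y)) atBot (𝓝 0) := by
  obtain ⟨C, n, hC, hbd⟩ := aux_growth_bound ha hb hd hf (m₁ := m₁) (m₂ := m₂)
  set D := C * ((1 + |x - m₁|^n) * Real.exp (-(x-m₁)^2/(4*a))) with hD
  have hnorm : ∀ y : ℝ, ‖f (x, y) * auxQW a b c m₁ m₂ (x, y)‖ ≤
      D * ((1 + |y - m₂|^n) * Real.exp (-(y-m₂)^2/(4*b))) := by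
    intro y
    rw [Real.norm_eq_abs]
    calc |f (x,y) * auxQW a b c m₁ m₂ (x,y)| ≤ _ := hbd (x, y)
      _ = D * ((1 + |y - m₂|^n) * Real.exp (-(y-m₂)^2/(4*b))) := by rw [hD]; ring
  constructor
  · apply squeeze_zero_norm hnorm
    have := (aux_psi_tendsto_top b m₂ hb n).const_mul D
    simpa using this
  · apply squeeze_zero_norm hnorm
    have := (aux_psi_tendsto_bot b m₂ hb n).const_mul D
    simpa using this

lemma aux_ibp1 (ha : 0 < a) (hb : 0 < b) (hd : 0 < a*b-c^2)
    {f f₁ : ℝ × ℝ → ℝ} (hfc : Continuous f) (hf₁c : Continuous f₁)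
    (hfg : PolyGrowth f) (hf₁g : PolyGrowth f₁)
    (hder : ∀ p : ℝ × ℝ, HasDerivAt (fun x => f (x, p.2)) (f₁ p) p.1) :
    ∫ p : ℝ × ℝ, (f₁ p + f p * auxL1 a b c m₁ m₂ p) * auxQW a b c m₁ m₂ p = 0 := by
  set g : ℝ × ℝ → ℝ := fun p => f₁ p + f p * auxL1 a b c m₁ m₂ p with hg
  have hgc : Continuous g := hf₁c.add (hfc.mul auxL1_cont)
  have hgg : PolyGrowth g := aux_pg_add hf₁g (aux_pg_mul hfg auxL1_pg)
  have hint : Integrable (fun p : ℝ × ℝ => g p * auxQW a b c m₁ m₂ p) :=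
    aux_int_QW ha hb hd hgc hgg
  have hzero : ∀ y : ℝ, ∫ x : ℝ, g (x, y) * auxQW a b c m₁ m₂ (x, y) = 0 := by
    intro y
    apply aux_ftc_zero (fun x => f (x, y) * auxQW a b c m₁ m₂ (x, y))
    · intro x
      have h1 := hder (x, y)
      have h2 := auxQW_hasDeriv1 (a := a) (b := b) (c := c) (m₁ := m₁) (m₂ := m₂) (x, y)
      have h3 := h1.mul h2
      refine h3.congr_deriv ?_
      simp only [g]
      ring
    · exact aux_slice_int1 ha hb hd hgc hgg y
    · exact (aux_slice_tend1 ha hb hd hfg y).1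
    · exact (aux_slice_tend1 ha hb hd hfg y).2
  have hrw : ∫ p : ℝ × ℝ, g p * auxQW a b c m₁ m₂ p
      = ∫ y : ℝ, ∫ x : ℝ, g (x, y) * auxQW a b c m₁ m₂ (x, y) := by
    rw [Measure.volume_eq_prod] at hint ⊢
    exact MeasureTheory.integral_prod_symm _ hint
  rw [← hg] at *
  rw [hrw]
  simp [hzero]

lemma aux_ibp2 (ha : 0 < a) (hb : 0 < b) (hd : 0 < a*b-c^2)
    {f f₂ : ℝ × ℝ → ℝ} (hfc : Continuous f) (hf₂c : Continuous f₂)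
    (hfg : PolyGrowth f) (hf₂g : PolyGrowth f₂)
    (hder : ∀ p : ℝ × ℝ, HasDerivAt (fun y => f (p.1, y)) (f₂ p) p.2) :
    ∫ p : ℝ × ℝ, (f₂ p + f p * auxL2 a b c m₁ m₂ p) * auxQW a b c m₁ m₂ p = 0 := by
  set g : ℝ × ℝ → ℝ := fun p => f₂ p + f p * auxL2 a b c m₁ m₂ p with hg
  have hgc : Continuous g := hf₂c.add (hfc.mul auxL2_cont)
  have hgg : PolyGrowth g := aux_pg_add hf₂g (aux_pg_mul hfg auxL2_pg)
  have hint : Integrable (fun p : ℝ × ℝ => g p * auxQW a b c m₁ m₂ p) :=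
    aux_int_QW ha hb hd hgc hgg
  have hzero : ∀ x : ℝ, ∫ y : ℝ, g (x, y) * auxQW a b c m₁ m₂ (x, y) = 0 := by
    intro x
    apply aux_ftc_zero (fun y => f (x, y) * auxQW a b c m₁ m₂ (x, y))
    · intro y
      have h1 := hder (x, y)
      have h2 := auxQW_hasDeriv2 (a := a) (b := b) (c := c) (m₁ := m₁) (m₂ := m₂) (x, y)
      have h3 := h1.mul h2
      refine h3.congr_deriv ?_
      simp only [g]
      ring
    · exact aux_slice_int2 ha hb hd hgc hgg x
    · exact (aux_slice_tend2 ha hb hd hfg x).1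
    · exact (aux_slice_tend2 ha hb hd hfg x).2
  have hrw : ∫ p : ℝ × ℝ, g p * auxQW a b c m₁ m₂ p
      = ∫ x : ℝ, ∫ y : ℝ, g (x, y) * auxQW a b c m₁ m₂ (x, y) := by
    rw [Measure.volume_eq_prod] at hint ⊢
    exact MeasureTheory.integral_prod _ hint
  rw [← hg] at *
  rw [hrw]
  simp [hzero]




lemma aux_sliceD1 {f : ℝ × ℝ → ℝ} (hf : Differentiable ℝ f) (p : ℝ × ℝ) :
    HasDerivAt (fun x => f (x, p.2)) (pd1 f p) p.1 := by
  have h : HasDerivAt (fun x : ℝ => (x, p.2)) ((1:ℝ), (0:ℝ)) p.1 :=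
    (hasDerivAt_id p.1).prodMk (hasDerivAt_const p.1 p.2)
  have := (hf (p.1, p.2)).hasFDerivAt.comp_hasDerivAt p.1 h
  exact this

lemma aux_sliceD2 {f : ℝ × ℝ → ℝ} (hf : Differentiable ℝ f) (p : ℝ × ℝ) :
    HasDerivAt (fun y => f (p.1, y)) (pd2 f p) p.2 := by
  have h : HasDerivAt (fun y : ℝ => (p.1, y)) ((0:ℝ), (1:ℝ)) p.2 :=
    (hasDerivAt_const p.2 p.1).prodMk (hasDerivAt_id p.2)
  have := (hf (p.1, p.2)).hasFDerivAt.comp_hasDerivAt p.2 h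
  exact this

lemma aux_pd1_C1 {f : ℝ × ℝ → ℝ} (hf : ContDiff ℝ 2 f) : ContDiff ℝ 1 (pd1 f) := by
  have h1 : ContDiff ℝ 1 (fderiv ℝ f) := hf.fderiv_right (by norm_num)
  exact h1.clm_apply contDiff_const

lemma aux_pd2_C1 {f : ℝ × ℝ → ℝ} (hf : ContDiff ℝ 2 f) : ContDiff ℝ 1 (pd2 f) := by
  have h1 : ContDiff ℝ 1 (fderiv ℝ f) := hf.fderiv_right (by norm_num)
  exact h1.clm_apply contDiff_const

lemma aux_pd_cont_of_C1 {g : ℝ × ℝ → ℝ} (hg : ContDiff ℝ 1 g) :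
    Continuous (pd1 g) ∧ Continuous (pd2 g) := by
  have h := hg.continuous_fderiv one_ne_zero
  exact ⟨h.clm_apply continuous_const, h.clm_apply continuous_const⟩

lemma aux_symm_second {f : ℝ × ℝ → ℝ} (hf : ContDiff ℝ 2 f) :
    pd1 (pd2 f) = pd2 (pd1 f) := by
  funext p
  have hF' : ∀ y, HasFDerivAt f (fderiv ℝ f y) y :=
    fun y => (hf.differentiable (by norm_num) y).hasFDerivAt
  have hC1 : ContDiff ℝ 1 (fderiv ℝ f) := hf.fderiv_right (by norm_num)
  have hF'' : HasFDerivAt (fderiv ℝ f) (fderiv ℝ (fderiv ℝ f) p) p :=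
    (hC1.differentiable one_ne_zero p).hasFDerivAt
  have hsymm := second_derivative_symmetric hF' hF'' ((1:ℝ), (0:ℝ)) ((0:ℝ), (1:ℝ))
  have h2 : HasFDerivAt (pd2 f)
      ((ContinuousLinearMap.apply ℝ ℝ ((0:ℝ),(1:ℝ))).comp (fderiv ℝ (fderiv ℝ f) p)) p :=
    (ContinuousLinearMap.apply ℝ ℝ ((0:ℝ),(1:ℝ))).hasFDerivAt.comp p hF''
  have h1 : HasFDerivAt (pd1 f)
      ((ContinuousLinearMap.apply ℝ ℝ ((1:ℝ),(0:ℝ))).comp (fderiv ℝ (fderiv ℝ f) p)) p :=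
    (ContinuousLinearMap.apply ℝ ℝ ((1:ℝ),(0:ℝ))).hasFDerivAt.comp p hF''
  have e1 : pd1 (pd2 f) p = fderiv ℝ (fderiv ℝ f) p ((1:ℝ),(0:ℝ)) ((0:ℝ),(1:ℝ)) := by
    show fderiv ℝ (pd2 f) p (1, 0) = _
    rw [h2.fderiv]; rfl
  have e2 : pd2 (pd1 f) p = fderiv ℝ (fderiv ℝ f) p ((0:ℝ),(1:ℝ)) ((1:ℝ),(0:ℝ)) := by
    show fderiv ℝ (pd1 f) p (0, 1) = _
    rw [h1.fderiv]; rfl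
  rw [e1, e2, hsymm]


lemma aux_gaussPi_eq (l₁ l₂ η₁ η₂ ρ m₁ m₂ : ℝ)
    (hd : (η₁^2/(2*l₁)) * (η₂^2/(2*l₂)) - (ρ*η₁*η₂/(l₁+l₂))^2 ≠ 0) (p : ℝ × ℝ) :
    gaussPi l₁ l₂ η₁ η₂ ρ m₁ m₂ p =
      ((2*π)⁻¹ * ((η₁^2/(2*l₁)) * (η₂^2/(2*l₂)) - (ρ*η₁*η₂/(l₁+l₂))^2) ^ (-(1:ℝ)/2)) *
      auxQW (η₁^2/(2*l₁)) (η₂^2/(2*l₂)) (ρ*η₁*η₂/(l₁+l₂)) m₁ m₂ p := by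
  set aa := η₁^2/(2*l₁) with haa
  set bb := η₂^2/(2*l₂) with hbb
  set cc := ρ*η₁*η₂/(l₁+l₂) with hcc
  have hdet : (matA l₁ l₂ η₁ η₂ ρ).det = aa*bb - cc^2 := by
    rw [matA, Matrix.det_fin_two_of]; ring
  have hinv : (matA l₁ l₂ η₁ η₂ ρ)⁻¹ = (aa*bb - cc^2)⁻¹ • !![bb, -cc; -cc, aa] := by
    rw [Matrix.inv_def, hdet, Ring.inverse_eq_inv']
    rw [matA, Matrix.adjugate_fin_two_of]
  rw [gaussPi, hdet, hinv, auxQW]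
  congr 1
  congr 1
  simp [Matrix.smul_mulVec, Matrix.mulVec, dotProduct, Fin.sum_univ_two]
  ring


set_option maxHeartbeats 2000000 in
lemma aux_pointwise_identity (l₁ l₂ η₁ η₂ ρ m₁ m₂ X Y E U V U11 U12 V22 A : ℝ)
    (hl₁ : l₁ ≠ 0) (hl₂ : l₂ ≠ 0) (hl12 : l₁ + l₂ ≠ 0)
    (hdd' : (η₁^2/(2*l₁)) * (η₂^2/(2*l₂)) - (ρ*η₁*η₂/(l₁+l₂))^2 ≠ 0) :
    (E * ((1/2) * η₁^2 * U11 + ρ*η₁*η₂ * U12 + (1/2) * η₂^2 * V22 + l₁ * (m₁ - X) * U + l₂ * (m₂ - Y) * V)) * A + ((1/2)*η₁^2*(U * U) + ρ*η₁*η₂*(U * V) + (1/2)*η₂^2*(V * V)) * A = ((1/2)*η₁^2) * ((U * U + E * U11 + (E * U) * (((ρ*η₁*η₂/(l₁+l₂))*(Y-m₂) - (η₂^2/(2*l₂))*(X-m₁)) * ((η₁^2/(2*l₁))*(η₂^2/(2*l₂))-(ρ*η₁*η₂/(l₁+l₂))^2)⁻¹)) * A) + (((1/2)*(ρ*η₁*η₂))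 * ((V * U + E * U12 + (E * U) * (((ρ*η₁*η₂/(l₁+l₂))*(X-m₁) - (η₁^2/(2*l₁))*(Y-m₂)) * ((η₁^2/(2*l₁))*(η₂^2/(2*l₂))-(ρ*η₁*η₂/(l₁+l₂))^2)⁻¹)) * A) + (((1/2)*(ρ*η₁*η₂)) * ((U * V + E * U12 + (E * V) * (((ρ*η₁*η₂/(l₁+l₂))*(Y-m₂) - (η₂^2/(2*l₂))*(X-m₁)) * ((η₁^2/(2*l₁))*(η₂^2/(2*l₂))-(ρ*η₁*η₂/(l₁+l₂))^2)⁻¹)) * A) + (((1/2)*η₂^2) * ((V * V + E * V22 + (E * V) * (((ρ*η₁*η₂/(l₁+l₂))*(X-m₁) - (η₁^2/(2*l₁))*(Y-m₂)) * ((η₁^2/(2*l₁))*(η₂^2/(2*l₂))-(ρ*η₁*η₂/(l₁+l₂))^2)⁻¹)) * A) + (((1/2):ℝ) * (((U * E + E * U) * (l₁*(m₁-X) - (1/2)*η₁^2 * (((ρ*η₁*η₂/(l₁+l₂))*(Y-m₂) - (η₂^2/(2*l₂))*(X-m₁)) * ((η₁^2/(2*l₁))*(η₂^2/(2*l₂))-(ρ*η₁*η₂/(l₁+l₂))^2)⁻¹)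 - (1/2)*(ρ*η₁*η₂) * (((ρ*η₁*η₂/(l₁+l₂))*(X-m₁) - (η₁^2/(2*l₁))*(Y-m₂)) * ((η₁^2/(2*l₁))*(η₂^2/(2*l₂))-(ρ*η₁*η₂/(l₁+l₂))^2)⁻¹)) + E * E * (l₁*(0-1) - (1/2)*η₁^2 * (-(η₂^2/(2*l₂)) * ((η₁^2/(2*l₁))*(η₂^2/(2*l₂))-(ρ*η₁*η₂/(l₁+l₂))^2)⁻¹) - (1/2)*(ρ*η₁*η₂) * ((ρ*η₁*η₂/(l₁+l₂)) * ((η₁^2/(2*l₁))*(η₂^2/(2*l₂))-(ρ*η₁*η₂/(l₁+l₂))^2)⁻¹)) + (E * E * (l₁*(m₁-X) - (1/2)*η₁^2 * (((ρ*η₁*η₂/(l₁+l₂))*(Y-m₂) - (η₂^2/(2*l₂))*(X-m₁)) * ((η₁^2/(2*l₁))*(η₂^2/(2*l₂))-(ρ*η₁*η₂/(l₁+l₂))^2)⁻¹) - (1/2)*(ρ*η₁*η₂) * (((ρ*η₁*η₂/(l₁+l₂))*(X-m₁) - (η₁^2/(2*l₁))*(Y-m₂)) * ((η₁^2/(2*l₁))*(η₂^2/(2*l₂))-(ρ*η₁*η₂/(l₁+l₂))^2)⁻¹)))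 * (((ρ*η₁*η₂/(l₁+l₂))*(Y-m₂) - (η₂^2/(2*l₂))*(X-m₁)) * ((η₁^2/(2*l₁))*(η₂^2/(2*l₂))-(ρ*η₁*η₂/(l₁+l₂))^2)⁻¹)) * A) + (((1/2):ℝ) * (((V * E + E * V) * (l₂*(m₂-Y) - (1/2)*(ρ*η₁*η₂) * (((ρ*η₁*η₂/(l₁+l₂))*(Y-m₂) - (η₂^2/(2*l₂))*(X-m₁)) * ((η₁^2/(2*l₁))*(η₂^2/(2*l₂))-(ρ*η₁*η₂/(l₁+l₂))^2)⁻¹) - (1/2)*η₂^2 * (((ρ*η₁*η₂/(l₁+l₂))*(X-m₁) - (η₁^2/(2*l₁))*(Y-m₂)) * ((η₁^2/(2*l₁))*(η₂^2/(2*l₂))-(ρ*η₁*η₂/(l₁+l₂))^2)⁻¹)) + E * E * (l₂*(0-1) - (1/2)*(ρ*η₁*η₂) * ((ρ*η₁*η₂/(l₁+l₂)) * ((η₁^2/(2*l₁))*(η₂^2/(2*l₂))-(ρ*η₁*η₂/(l₁+l₂))^2)⁻¹) - (1/2)*η₂^2 * (-(η₁^2/(2*l₁)) * ((η₁^2/(2*l₁))*(η₂^2/(2*l₂))-(ρ*η₁*η₂/(l₁+l₂))^2)⁻¹))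 + (E * E * (l₂*(m₂-Y) - (1/2)*(ρ*η₁*η₂) * (((ρ*η₁*η₂/(l₁+l₂))*(Y-m₂) - (η₂^2/(2*l₂))*(X-m₁)) * ((η₁^2/(2*l₁))*(η₂^2/(2*l₂))-(ρ*η₁*η₂/(l₁+l₂))^2)⁻¹) - (1/2)*η₂^2 * (((ρ*η₁*η₂/(l₁+l₂))*(X-m₁) - (η₁^2/(2*l₁))*(Y-m₂)) * ((η₁^2/(2*l₁))*(η₂^2/(2*l₂))-(ρ*η₁*η₂/(l₁+l₂))^2)⁻¹))) * (((ρ*η₁*η₂/(l₁+l₂))*(X-m₁) - (η₁^2/(2*l₁))*(Y-m₂)) * ((η₁^2/(2*l₁))*(η₂^2/(2*l₂))-(ρ*η₁*η₂/(l₁+l₂))^2)⁻¹)) * A)))))) := by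
  generalize hA : (η₁^2/(2*l₁) : ℝ) = aa at hdd' ⊢
  generalize hB : (η₂^2/(2*l₂) : ℝ) = bb at hdd' ⊢
  generalize hC : (ρ*η₁*η₂/(l₁+l₂) : ℝ) = cc at hdd' ⊢
  rw [show η₁^2 = 2*l₁*aa by rw [← hA]; field_simp]
  rw [show η₂^2 = 2*l₂*bb by rw [← hB]; field_simp]
  rw [show ρ*η₁*η₂ = (l₁+l₂)*cc by rw [← hC]; field_simp]
  field_simp
  ring


set_option maxHeartbeats 1000000 in
/-- Energy/coercivity estimate for the OU generator: for `0 ≤ ρ < 1`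
and every `C²` function `e` with at most polynomially growing derivatives up to
order 2, `−∫ e (Le) Π dy ≥ (1/2) min(η₁², η₂²)(1−ρ) ∫ |∇e|² Π dy`. -/
theorem generator_energy_estimate
    (l₁ l₂ η₁ η₂ ρ m₁ m₂ : ℝ)
    (hl₁ : 0 < l₁) (hl₂ : 0 < l₂) (hη₁ : 0 < η₁) (hη₂ : 0 < η₂)
    (hρ0 : 0 ≤ ρ) (hρ1 : ρ < 1)
    (e : ℝ × ℝ → ℝ) (he : NicelyC2 e) :
    (1/2) * min (η₁^2) (η₂^2) * (1 - ρ) *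
        ∫ p : ℝ × ℝ, ((pd1 e p)^2 + (pd2 e p)^2) * gaussPi l₁ l₂ η₁ η₂ ρ m₁ m₂ p ≤
      -∫ p : ℝ × ℝ,
        e p * gen l₁ l₂ η₁ η₂ ρ m₁ m₂ e p * gaussPi l₁ l₂ η₁ η₂ ρ m₁ m₂ p := by
  obtain ⟨he2, hpg_e, hpg_u, hpg_v, hpg_u11, hpg_u12, hpg_v12, hpg_v22⟩ := he
  have hl12 : (0:ℝ) < l₁ + l₂ := by linarith
  have haa0 : (0:ℝ) < (η₁^2/(2*l₁)) := by positivity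
  have hbb0 : (0:ℝ) < (η₂^2/(2*l₂)) := by positivity
  have hdd : (0:ℝ) < (η₁^2/(2*l₁)) * (η₂^2/(2*l₂)) - (ρ*η₁*η₂/(l₁+l₂))^2 := by
    have hρ2 : ρ^2 < 1 := by nlinarith
    have h1 : (ρ*η₁*η₂/(l₁+l₂))^2 = (ρ*η₁*η₂)^2/((l₁+l₂)^2) := by rw [div_pow]
    have h2 : (η₁^2/(2*l₁)) * (η₂^2/(2*l₂)) = (η₁^2*η₂^2)/(4*l₁*l₂) := by
      field_simp; ring
    rw [sub_pos, h1, h2, div_lt_div_iff₀ (by positivity) (by positivity)]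
    nlinarith [sq_nonneg (l₁ - l₂), mul_pos (mul_pos hl₁ hl₂) (mul_pos (pow_pos hη₁ 2) (pow_pos hη₂ 2)),
      mul_nonneg (sq_nonneg (l₁ - l₂)) (mul_pos (pow_pos hη₁ 2) (pow_pos hη₂ 2)).le]
  have hdd' : (η₁^2/(2*l₁)) * (η₂^2/(2*l₂)) - (ρ*η₁*η₂/(l₁+l₂))^2 ≠ 0 := ne_of_gt hdd
  -- derivative machinery for e
  have hediff : Differentiable ℝ e := he2.differentiable (by norm_num)
  have hecont : Continuous e := hediff.continuous
  have huC1 := aux_pd1_C1 he2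
  have hvC1 := aux_pd2_C1 he2
  have hudiff : Differentiable ℝ (pd1 e) := huC1.differentiable one_ne_zero
  have hvdiff : Differentiable ℝ (pd2 e) := hvC1.differentiable one_ne_zero
  have hucont : Continuous (pd1 e) := hudiff.continuous
  have hvcont : Continuous (pd2 e) := hvdiff.continuous
  have hu2c := aux_pd_cont_of_C1 huC1
  have hv2c := aux_pd_cont_of_C1 hvC1
  have h11c : Continuous (pd1 (pd1 e)) := hu2c.1
  have h12c : Continuous (pd2 (pd1 e)) := hu2c.2
  have h21c : Continuous (pd1 (pd2 e)) := hv2c.1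
  have h22c : Continuous (pd2 (pd2 e)) := hv2c.2
  have hsymm : pd1 (pd2 e) = pd2 (pd1 e) := aux_symm_second he2
  -- c1, c2 facts
  have hC1cont : Continuous (fun p : ℝ × ℝ => l₁*(m₁-p.1) - (1/2)*η₁^2 * auxL1 (η₁^2/(2*l₁)) (η₂^2/(2*l₂)) (ρ*η₁*η₂/(l₁+l₂)) m₁ m₂ p - (1/2)*(ρ*η₁*η₂) * auxL2 (η₁^2/(2*l₁)) (η₂^2/(2*l₂)) (ρ*η₁*η₂/(l₁+l₂)) m₁ m₂ p) :=
    ((continuous_const.mul (continuous_const.sub continuous_fst)).sub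
      (continuous_const.mul auxL1_cont)).sub (continuous_const.mul auxL2_cont)
  have hC2cont : Continuous (fun p : ℝ × ℝ => l₂*(m₂-p.2) - (1/2)*(ρ*η₁*η₂) * auxL1 (η₁^2/(2*l₁)) (η₂^2/(2*l₂)) (ρ*η₁*η₂/(l₁+l₂)) m₁ m₂ p - (1/2)*η₂^2 * auxL2 (η₁^2/(2*l₁)) (η₂^2/(2*l₂)) (ρ*η₁*η₂/(l₁+l₂)) m₁ m₂ p) :=
    ((continuous_const.mul (continuous_const.sub continuous_snd)).sub
      (continuous_const.mul auxL1_cont)).sub (continuous_const.mul auxL2_cont)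
  have hC1pg : PolyGrowth (fun p : ℝ × ℝ => l₁*(m₁-p.1) - (1/2)*η₁^2 * auxL1 (η₁^2/(2*l₁)) (η₂^2/(2*l₂)) (ρ*η₁*η₂/(l₁+l₂)) m₁ m₂ p - (1/2)*(ρ*η₁*η₂) * auxL2 (η₁^2/(2*l₁)) (η₂^2/(2*l₂)) (ρ*η₁*η₂/(l₁+l₂)) m₁ m₂ p) :=
    aux_pg_sub (aux_pg_sub (aux_pg_mul (aux_pg_const l₁) (aux_pg_sub (aux_pg_const m₁) aux_pg_fst))
      (aux_pg_mul (aux_pg_const _) auxL1_pg)) (aux_pg_mul (aux_pg_const _) auxL2_pg)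
  have hC2pg : PolyGrowth (fun p : ℝ × ℝ => l₂*(m₂-p.2) - (1/2)*(ρ*η₁*η₂) * auxL1 (η₁^2/(2*l₁)) (η₂^2/(2*l₂)) (ρ*η₁*η₂/(l₁+l₂)) m₁ m₂ p - (1/2)*η₂^2 * auxL2 (η₁^2/(2*l₁)) (η₂^2/(2*l₂)) (ρ*η₁*η₂/(l₁+l₂)) m₁ m₂ p) :=
    aux_pg_sub (aux_pg_sub (aux_pg_mul (aux_pg_const l₂) (aux_pg_sub (aux_pg_const m₂) aux_pg_snd))
      (aux_pg_mul (aux_pg_const _) auxL1_pg)) (aux_pg_mul (aux_pg_const _) auxL2_pg)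
  have hC1d : ∀ p : ℝ × ℝ, HasDerivAt (fun x => (fun p : ℝ × ℝ => l₁*(m₁-p.1) - (1/2)*η₁^2 * auxL1 (η₁^2/(2*l₁)) (η₂^2/(2*l₂)) (ρ*η₁*η₂/(l₁+l₂)) m₁ m₂ p - (1/2)*(ρ*η₁*η₂) * auxL2 (η₁^2/(2*l₁)) (η₂^2/(2*l₂)) (ρ*η₁*η₂/(l₁+l₂)) m₁ m₂ p) (x, p.2)) (l₁*(0-1) - (1/2)*η₁^2 * (-(η₂^2/(2*l₂)) * ((η₁^2/(2*l₁))*(η₂^2/(2*l₂))-(ρ*η₁*η₂/(l₁+l₂))^2)⁻¹) - (1/2)*(ρ*η₁*η₂) * ((ρ*η₁*η₂/(l₁+l₂)) * ((η₁^2/(2*l₁))*(η₂^2/(2*l₂))-(ρ*η₁*η₂/(l₁+l₂))^2)⁻¹)) p.1 := by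
    intro p
    exact ((((hasDerivAt_const p.1 m₁).sub (hasDerivAt_id p.1)).const_mul l₁).sub
      ((auxL1_hasDeriv1 p).const_mul ((1/2)*η₁^2))).sub
      ((auxL2_hasDeriv1 p).const_mul ((1/2)*(ρ*η₁*η₂)))
  have hC2d : ∀ p : ℝ × ℝ, HasDerivAt (fun y => (fun p : ℝ × ℝ => l₂*(m₂-p.2) - (1/2)*(ρ*η₁*η₂) * auxL1 (η₁^2/(2*l₁)) (η₂^2/(2*l₂)) (ρ*η₁*η₂/(l₁+l₂)) m₁ m₂ p - (1/2)*η₂^2 * auxL2 (η₁^2/(2*l₁)) (η₂^2/(2*l₂)) (ρ*η₁*η₂/(l₁+l₂)) m₁ m₂ p) (p.1, y)) (l₂*(0-1) - (1/2)*(ρ*η₁*η₂) * ((ρ*η₁*η₂/(l₁+l₂)) * ((η₁^2/(2*l₁))*(η₂^2/(2*l₂))-(ρ*η₁*η₂/(l₁+l₂))^2)⁻¹) - (1/2)*η₂^2 * (-(η₁^2/(2*l₁)) * ((η₁^2/(2*l₁))*(η₂^2/(2*l₂))-(ρ*η₁*η₂/(l₁+l₂))^2)⁻¹)) p.2 :=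 by
    intro p
    exact ((((hasDerivAt_const p.2 m₂).sub (hasDerivAt_id p.2)).const_mul l₂).sub
      ((auxL1_hasDeriv2 p).const_mul ((1/2)*(ρ*η₁*η₂)))).sub
      ((auxL2_hasDeriv2 p).const_mul ((1/2)*η₂^2))
  -- the six integration-by-parts identities
  have hI1 : ∫ p : ℝ × ℝ, (pd1 e p * pd1 e p + e p * pd1 (pd1 e) p + (e p * pd1 e p) * auxL1 (η₁^2/(2*l₁)) (η₂^2/(2*l₂)) (ρ*η₁*η₂/(l₁+l₂)) m₁ m₂ p) * auxQW (η₁^2/(2*l₁)) (η₂^2/(2*l₂)) (ρ*η₁*η₂/(l₁+l₂)) m₁ m₂ p = 0 :=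
    aux_ibp1 haa0 hbb0 hdd (hecont.mul hucont)
      ((hucont.mul hucont).add (hecont.mul h11c))
      (aux_pg_mul hpg_e hpg_u)
      (aux_pg_add (aux_pg_mul hpg_u hpg_u) (aux_pg_mul hpg_e hpg_u11))
      (fun p => (aux_sliceD1 hediff p).mul (aux_sliceD1 hudiff p))
  have hI2 : ∫ p : ℝ × ℝ, (pd2 e p * pd1 e p + e p * pd2 (pd1 e) p + (e p * pd1 e p) * auxL2 (η₁^2/(2*l₁)) (η₂^2/(2*l₂)) (ρ*η₁*η₂/(l₁+l₂)) m₁ m₂ p) * auxQW (η₁^2/(2*l₁)) (η₂^2/(2*l₂)) (ρ*η₁*η₂/(l₁+l₂)) m₁ m₂ p = 0 :=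
    aux_ibp2 haa0 hbb0 hdd (hecont.mul hucont)
      ((hvcont.mul hucont).add (hecont.mul h12c))
      (aux_pg_mul hpg_e hpg_u)
      (aux_pg_add (aux_pg_mul hpg_v hpg_u) (aux_pg_mul hpg_e hpg_u12))
      (fun p => (aux_sliceD2 hediff p).mul (aux_sliceD2 hudiff p))
  have hI3 : ∫ p : ℝ × ℝ, (pd1 e p * pd2 e p + e p * pd1 (pd2 e) p + (e p * pd2 e p) * auxL1 (η₁^2/(2*l₁)) (η₂^2/(2*l₂)) (ρ*η₁*η₂/(l₁+l₂)) m₁ m₂ p) * auxQW (η₁^2/(2*l₁)) (η₂^2/(2*l₂)) (ρ*η₁*η₂/(l₁+l₂)) m₁ m₂ p = 0 :=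
    aux_ibp1 haa0 hbb0 hdd (hecont.mul hvcont)
      ((hucont.mul hvcont).add (hecont.mul h21c))
      (aux_pg_mul hpg_e hpg_v)
      (aux_pg_add (aux_pg_mul hpg_u hpg_v) (aux_pg_mul hpg_e hpg_v12))
      (fun p => (aux_sliceD1 hediff p).mul (aux_sliceD1 hvdiff p))
  have hI4 : ∫ p : ℝ × ℝ, (pd2 e p * pd2 e p + e p * pd2 (pd2 e) p + (e p * pd2 e p) * auxL2 (η₁^2/(2*l₁)) (η₂^2/(2*l₂)) (ρ*η₁*η₂/(l₁+l₂)) m₁ m₂ p) * auxQW (η₁^2/(2*l₁)) (η₂^2/(2*l₂)) (ρ*η₁*η₂/(l₁+l₂)) m₁ m₂ p = 0 :=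
    aux_ibp2 haa0 hbb0 hdd (hecont.mul hvcont)
      ((hvcont.mul hvcont).add (hecont.mul h22c))
      (aux_pg_mul hpg_e hpg_v)
      (aux_pg_add (aux_pg_mul hpg_v hpg_v) (aux_pg_mul hpg_e hpg_v22))
      (fun p => (aux_sliceD2 hediff p).mul (aux_sliceD2 hvdiff p))
  have hI5 : ∫ p : ℝ × ℝ, ((pd1 e p * e p + e p * pd1 e p) * (fun p : ℝ × ℝ => l₁*(m₁-p.1) - (1/2)*η₁^2 * auxL1 (η₁^2/(2*l₁)) (η₂^2/(2*l₂)) (ρ*η₁*η₂/(l₁+l₂)) m₁ m₂ p - (1/2)*(ρ*η₁*η₂) * auxL2 (η₁^2/(2*l₁)) (η₂^2/(2*l₂)) (ρ*η₁*η₂/(l₁+l₂)) m₁ m₂ p) p + e p * e p * (l₁*(0-1) - (1/2)*η₁^2 * (-(η₂^2/(2*l₂)) * ((η₁^2/(2*l₁))*(η₂^2/(2*l₂))-(ρ*η₁*η₂/(l₁+l₂))^2)⁻¹) - (1/2)*(ρ*η₁*η₂) * ((ρ*η₁*η₂/(l₁+l₂)) * ((η₁^2/(2*l₁))*(η₂^2/(2*l₂))-(ρ*η₁*η₂/(l₁+l₂))^2)⁻¹))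 + (e p * e p * (fun p : ℝ × ℝ => l₁*(m₁-p.1) - (1/2)*η₁^2 * auxL1 (η₁^2/(2*l₁)) (η₂^2/(2*l₂)) (ρ*η₁*η₂/(l₁+l₂)) m₁ m₂ p - (1/2)*(ρ*η₁*η₂) * auxL2 (η₁^2/(2*l₁)) (η₂^2/(2*l₂)) (ρ*η₁*η₂/(l₁+l₂)) m₁ m₂ p) p) * auxL1 (η₁^2/(2*l₁)) (η₂^2/(2*l₂)) (ρ*η₁*η₂/(l₁+l₂)) m₁ m₂ p) * auxQW (η₁^2/(2*l₁)) (η₂^2/(2*l₂)) (ρ*η₁*η₂/(l₁+l₂)) m₁ m₂ p = 0 :=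
    aux_ibp1 haa0 hbb0 hdd ((hecont.mul hecont).mul hC1cont)
      ((((hucont.mul hecont).add (hecont.mul hucont)).mul hC1cont).add
        ((hecont.mul hecont).mul continuous_const))
      (aux_pg_mul (aux_pg_mul hpg_e hpg_e) hC1pg)
      (aux_pg_add (aux_pg_mul (aux_pg_add (aux_pg_mul hpg_u hpg_e) (aux_pg_mul hpg_e hpg_u)) hC1pg)
        (aux_pg_mul (aux_pg_mul hpg_e hpg_e) (aux_pg_const _)))
      (fun p => (((aux_sliceD1 hediff p).mul (aux_sliceD1 hediff p)).mul (hC1d p)))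
  have hI6 : ∫ p : ℝ × ℝ, ((pd2 e p * e p + e p * pd2 e p) * (fun p : ℝ × ℝ => l₂*(m₂-p.2) - (1/2)*(ρ*η₁*η₂) * auxL1 (η₁^2/(2*l₁)) (η₂^2/(2*l₂)) (ρ*η₁*η₂/(l₁+l₂)) m₁ m₂ p - (1/2)*η₂^2 * auxL2 (η₁^2/(2*l₁)) (η₂^2/(2*l₂)) (ρ*η₁*η₂/(l₁+l₂)) m₁ m₂ p) p + e p * e p * (l₂*(0-1) - (1/2)*(ρ*η₁*η₂) * ((ρ*η₁*η₂/(l₁+l₂)) * ((η₁^2/(2*l₁))*(η₂^2/(2*l₂))-(ρ*η₁*η₂/(l₁+l₂))^2)⁻¹) - (1/2)*η₂^2 * (-(η₁^2/(2*l₁)) * ((η₁^2/(2*l₁))*(η₂^2/(2*l₂))-(ρ*η₁*η₂/(l₁+l₂))^2)⁻¹)) + (e p * e p * (fun p : ℝ × ℝ => l₂*(m₂-p.2) - (1/2)*(ρ*η₁*η₂) * auxL1 (η₁^2/(2*l₁)) (η₂^2/(2*l₂)) (ρ*η₁*η₂/(l₁+l₂)) m₁ m₂ p - (1/2)*η₂^2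 * auxL2 (η₁^2/(2*l₁)) (η₂^2/(2*l₂)) (ρ*η₁*η₂/(l₁+l₂)) m₁ m₂ p) p) * auxL2 (η₁^2/(2*l₁)) (η₂^2/(2*l₂)) (ρ*η₁*η₂/(l₁+l₂)) m₁ m₂ p) * auxQW (η₁^2/(2*l₁)) (η₂^2/(2*l₂)) (ρ*η₁*η₂/(l₁+l₂)) m₁ m₂ p = 0 :=
    aux_ibp2 haa0 hbb0 hdd ((hecont.mul hecont).mul hC2cont)
      ((((hvcont.mul hecont).add (hecont.mul hvcont)).mul hC2cont).add
        ((hecont.mul hecont).mul continuous_const))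
      (aux_pg_mul (aux_pg_mul hpg_e hpg_e) hC2pg)
      (aux_pg_add (aux_pg_mul (aux_pg_add (aux_pg_mul hpg_v hpg_e) (aux_pg_mul hpg_e hpg_v)) hC2pg)
        (aux_pg_mul (aux_pg_mul hpg_e hpg_e) (aux_pg_const _)))
      (fun p => (((aux_sliceD2 hediff p).mul (aux_sliceD2 hediff p)).mul (hC2d p)))
  -- integrability of the six pieces
  have hInt1 : Integrable (fun p : ℝ × ℝ => (pd1 e p * pd1 e p + e p * pd1 (pd1 e) p + (e p * pd1 e p) * auxL1 (η₁^2/(2*l₁)) (η₂^2/(2*l₂)) (ρ*η₁*η₂/(l₁+l₂)) m₁ m₂ p) * auxQW (η₁^2/(2*l₁)) (η₂^2/(2*l₂)) (ρ*η₁*η₂/(l₁+l₂)) m₁ m₂ p) :=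
    aux_int_QW haa0 hbb0 hdd
      (((hucont.mul hucont).add (hecont.mul h11c)).add ((hecont.mul hucont).mul auxL1_cont))
      (aux_pg_add (aux_pg_add (aux_pg_mul hpg_u hpg_u) (aux_pg_mul hpg_e hpg_u11))
        (aux_pg_mul (aux_pg_mul hpg_e hpg_u) auxL1_pg))
  have hInt2 : Integrable (fun p : ℝ × ℝ => (pd2 e p * pd1 e p + e p * pd2 (pd1 e) p + (e p * pd1 e p) * auxL2 (η₁^2/(2*l₁)) (η₂^2/(2*l₂)) (ρ*η₁*η₂/(l₁+l₂)) m₁ m₂ p) * auxQW (η₁^2/(2*l₁)) (η₂^2/(2*l₂)) (ρ*η₁*η₂/(l₁+l₂)) m₁ m₂ p) :=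
    aux_int_QW haa0 hbb0 hdd
      (((hvcont.mul hucont).add (hecont.mul h12c)).add ((hecont.mul hucont).mul auxL2_cont))
      (aux_pg_add (aux_pg_add (aux_pg_mul hpg_v hpg_u) (aux_pg_mul hpg_e hpg_u12))
        (aux_pg_mul (aux_pg_mul hpg_e hpg_u) auxL2_pg))
  have hInt3 : Integrable (fun p : ℝ × ℝ => (pd1 e p * pd2 e p + e p * pd1 (pd2 e) p + (e p * pd2 e p) * auxL1 (η₁^2/(2*l₁)) (η₂^2/(2*l₂)) (ρ*η₁*η₂/(l₁+l₂)) m₁ m₂ p) * auxQW (η₁^2/(2*l₁)) (η₂^2/(2*l₂)) (ρ*η₁*η₂/(l₁+l₂)) m₁ m₂ p) :=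
    aux_int_QW haa0 hbb0 hdd
      (((hucont.mul hvcont).add (hecont.mul h21c)).add ((hecont.mul hvcont).mul auxL1_cont))
      (aux_pg_add (aux_pg_add (aux_pg_mul hpg_u hpg_v) (aux_pg_mul hpg_e hpg_v12))
        (aux_pg_mul (aux_pg_mul hpg_e hpg_v) auxL1_pg))
  have hInt4 : Integrable (fun p : ℝ × ℝ => (pd2 e p * pd2 e p + e p * pd2 (pd2 e) p + (e p * pd2 e p) * auxL2 (η₁^2/(2*l₁)) (η₂^2/(2*l₂)) (ρ*η₁*η₂/(l₁+l₂)) m₁ m₂ p) * auxQW (η₁^2/(2*l₁)) (η₂^2/(2*l₂)) (ρ*η₁*η₂/(l₁+l₂)) m₁ m₂ p) :=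
    aux_int_QW haa0 hbb0 hdd
      (((hvcont.mul hvcont).add (hecont.mul h22c)).add ((hecont.mul hvcont).mul auxL2_cont))
      (aux_pg_add (aux_pg_add (aux_pg_mul hpg_v hpg_v) (aux_pg_mul hpg_e hpg_v22))
        (aux_pg_mul (aux_pg_mul hpg_e hpg_v) auxL2_pg))
  have hInt5 : Integrable (fun p : ℝ × ℝ => ((pd1 e p * e p + e p * pd1 e p) * (fun p : ℝ × ℝ => l₁*(m₁-p.1) - (1/2)*η₁^2 * auxL1 (η₁^2/(2*l₁)) (η₂^2/(2*l₂)) (ρ*η₁*η₂/(l₁+l₂)) m₁ m₂ p - (1/2)*(ρ*η₁*η₂) * auxL2 (η₁^2/(2*l₁)) (η₂^2/(2*l₂)) (ρ*η₁*η₂/(l₁+l₂)) m₁ m₂ p) p + e p * e p * (l₁*(0-1) - (1/2)*η₁^2 * (-(η₂^2/(2*l₂)) * ((η₁^2/(2*l₁))*(η₂^2/(2*l₂))-(ρ*η₁*η₂/(l₁+l₂))^2)⁻¹) - (1/2)*(ρ*η₁*η₂) * ((ρ*η₁*η₂/(l₁+l₂)) * ((η₁^2/(2*l₁))*(η₂^2/(2*l₂))-(ρ*η₁*η₂/(l₁+l₂))^2)⁻¹))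 + (e p * e p * (fun p : ℝ × ℝ => l₁*(m₁-p.1) - (1/2)*η₁^2 * auxL1 (η₁^2/(2*l₁)) (η₂^2/(2*l₂)) (ρ*η₁*η₂/(l₁+l₂)) m₁ m₂ p - (1/2)*(ρ*η₁*η₂) * auxL2 (η₁^2/(2*l₁)) (η₂^2/(2*l₂)) (ρ*η₁*η₂/(l₁+l₂)) m₁ m₂ p) p) * auxL1 (η₁^2/(2*l₁)) (η₂^2/(2*l₂)) (ρ*η₁*η₂/(l₁+l₂)) m₁ m₂ p) * auxQW (η₁^2/(2*l₁)) (η₂^2/(2*l₂)) (ρ*η₁*η₂/(l₁+l₂)) m₁ m₂ p) :=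
    aux_int_QW haa0 hbb0 hdd
      (((((hucont.mul hecont).add (hecont.mul hucont)).mul hC1cont).add
        ((hecont.mul hecont).mul continuous_const)).add
        (((hecont.mul hecont).mul hC1cont).mul auxL1_cont))
      (aux_pg_add (aux_pg_add
        (aux_pg_mul (aux_pg_add (aux_pg_mul hpg_u hpg_e) (aux_pg_mul hpg_e hpg_u)) hC1pg)
        (aux_pg_mul (aux_pg_mul hpg_e hpg_e) (aux_pg_const _)))
        (aux_pg_mul (aux_pg_mul (aux_pg_mul hpg_e hpg_e) hC1pg) auxL1_pg))
  have hInt6 : Integrable (fun p : ℝ × ℝ => ((pd2 e p * e p + e p * pd2 e p) * (fun p : ℝ × ℝ => l₂*(m₂-p.2) - (1/2)*(ρ*η₁*η₂) * auxL1 (η₁^2/(2*l₁)) (η₂^2/(2*l₂)) (ρ*η₁*η₂/(l₁+l₂)) m₁ m₂ p - (1/2)*η₂^2 * auxL2 (η₁^2/(2*l₁)) (η₂^2/(2*l₂)) (ρ*η₁*η₂/(l₁+l₂)) m₁ m₂ p) p + e p * e p * (l₂*(0-1) - (1/2)*(ρ*η₁*η₂) * ((ρ*η₁*η₂/(l₁+l₂))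 * ((η₁^2/(2*l₁))*(η₂^2/(2*l₂))-(ρ*η₁*η₂/(l₁+l₂))^2)⁻¹) - (1/2)*η₂^2 * (-(η₁^2/(2*l₁)) * ((η₁^2/(2*l₁))*(η₂^2/(2*l₂))-(ρ*η₁*η₂/(l₁+l₂))^2)⁻¹)) + (e p * e p * (fun p : ℝ × ℝ => l₂*(m₂-p.2) - (1/2)*(ρ*η₁*η₂) * auxL1 (η₁^2/(2*l₁)) (η₂^2/(2*l₂)) (ρ*η₁*η₂/(l₁+l₂)) m₁ m₂ p - (1/2)*η₂^2 * auxL2 (η₁^2/(2*l₁)) (η₂^2/(2*l₂)) (ρ*η₁*η₂/(l₁+l₂)) m₁ m₂ p) p) * auxL2 (η₁^2/(2*l₁)) (η₂^2/(2*l₂)) (ρ*η₁*η₂/(l₁+l₂)) m₁ m₂ p) * auxQW (η₁^2/(2*l₁)) (η₂^2/(2*l₂)) (ρ*η₁*η₂/(l₁+l₂)) m₁ m₂ p) :=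
    aux_int_QW haa0 hbb0 hdd
      (((((hvcont.mul hecont).add (hecont.mul hvcont)).mul hC2cont).add
        ((hecont.mul hecont).mul continuous_const)).add
        (((hecont.mul hecont).mul hC2cont).mul auxL2_cont))
      (aux_pg_add (aux_pg_add
        (aux_pg_mul (aux_pg_add (aux_pg_mul hpg_v hpg_e) (aux_pg_mul hpg_e hpg_v)) hC2pg)
        (aux_pg_mul (aux_pg_mul hpg_e hpg_e) (aux_pg_const _)))
        (aux_pg_mul (aux_pg_mul (aux_pg_mul hpg_e hpg_e) hC2pg) auxL2_pg))
  -- continuity and growth of e * gen e and of the B-form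
  have hgencont : Continuous (fun p : ℝ × ℝ => gen l₁ l₂ η₁ η₂ ρ m₁ m₂ e p) := by
    unfold gen
    exact ((((continuous_const.mul h11c).add (continuous_const.mul h12c)).add (continuous_const.mul h22c)).add
      ((continuous_const.mul (continuous_const.sub continuous_fst)).mul hucont)).add
      ((continuous_const.mul (continuous_const.sub continuous_snd)).mul hvcont)
  have hgenpg : PolyGrowth (fun p : ℝ × ℝ => gen l₁ l₂ η₁ η₂ ρ m₁ m₂ e p) := by
    unfold gen
    exact aux_pg_add (aux_pg_add (aux_pg_add (aux_pg_add
      (aux_pg_mul (aux_pg_const _) hpg_u11) (aux_pg_mul (aux_pg_const _) hpg_u12))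
      (aux_pg_mul (aux_pg_const _) hpg_v22))
      (aux_pg_mul (aux_pg_mul (aux_pg_const l₁) (aux_pg_sub (aux_pg_const m₁) aux_pg_fst)) hpg_u))
      (aux_pg_mul (aux_pg_mul (aux_pg_const l₂) (aux_pg_sub (aux_pg_const m₂) aux_pg_snd)) hpg_v)
  have hIntA : Integrable (fun p : ℝ × ℝ => (e p * gen l₁ l₂ η₁ η₂ ρ m₁ m₂ e p) * auxQW (η₁^2/(2*l₁)) (η₂^2/(2*l₂)) (ρ*η₁*η₂/(l₁+l₂)) m₁ m₂ p) :=
    aux_int_QW haa0 hbb0 hdd (hecont.mul hgencont) (aux_pg_mul hpg_e hgenpg)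
  have hIntB : Integrable (fun p : ℝ × ℝ => ((1/2)*η₁^2*(pd1 e p * pd1 e p) + ρ*η₁*η₂*(pd1 e p * pd2 e p) + (1/2)*η₂^2*(pd2 e p * pd2 e p)) * auxQW (η₁^2/(2*l₁)) (η₂^2/(2*l₂)) (ρ*η₁*η₂/(l₁+l₂)) m₁ m₂ p) :=
    aux_int_QW haa0 hbb0 hdd
      ((((continuous_const.mul (hucont.mul hucont)).add (continuous_const.mul (hucont.mul hvcont))).add
        (continuous_const.mul (hvcont.mul hvcont))))
      (aux_pg_add (aux_pg_add (aux_pg_mul (aux_pg_const _) (aux_pg_mul hpg_u hpg_u))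
        (aux_pg_mul (aux_pg_const _) (aux_pg_mul hpg_u hpg_v)))
        (aux_pg_mul (aux_pg_const _) (aux_pg_mul hpg_v hpg_v)))
  -- the key cancellation
  have hsum : ∫ p : ℝ × ℝ, ((e p * gen l₁ l₂ η₁ η₂ ρ m₁ m₂ e p) * auxQW (η₁^2/(2*l₁)) (η₂^2/(2*l₂)) (ρ*η₁*η₂/(l₁+l₂)) m₁ m₂ p + ((1/2)*η₁^2*(pd1 e p * pd1 e p) + ρ*η₁*η₂*(pd1 e p * pd2 e p) + (1/2)*η₂^2*(pd2 e p * pd2 e p)) * auxQW (η₁^2/(2*l₁)) (η₂^2/(2*l₂)) (ρ*η₁*η₂/(l₁+l₂)) m₁ m₂ p) = 0 := by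
    have hpt : (fun p : ℝ × ℝ => (e p * gen l₁ l₂ η₁ η₂ ρ m₁ m₂ e p) * auxQW (η₁^2/(2*l₁)) (η₂^2/(2*l₂)) (ρ*η₁*η₂/(l₁+l₂)) m₁ m₂ p + ((1/2)*η₁^2*(pd1 e p * pd1 e p) + ρ*η₁*η₂*(pd1 e p * pd2 e p) + (1/2)*η₂^2*(pd2 e p * pd2 e p)) * auxQW (η₁^2/(2*l₁)) (η₂^2/(2*l₂)) (ρ*η₁*η₂/(l₁+l₂)) m₁ m₂ p)
        = fun p : ℝ × ℝ => ((1/2)*η₁^2) * ((pd1 e p * pd1 e p + e p * pd1 (pd1 e) p + (e p * pd1 e p) * auxL1 (η₁^2/(2*l₁)) (η₂^2/(2*l₂)) (ρ*η₁*η₂/(l₁+l₂)) m₁ m₂ p) * auxQW (η₁^2/(2*l₁)) (η₂^2/(2*l₂)) (ρ*η₁*η₂/(l₁+l₂)) m₁ m₂ p) + (((1/2)*(ρ*η₁*η₂)) * ((pd2 e p * pd1 e p + e p * pd2 (pd1 e) p + (e p * pd1 e p) * auxL2 (η₁^2/(2*l₁)) (η₂^2/(2*l₂)) (ρ*η₁*η₂/(l₁+l₂))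 m₁ m₂ p) * auxQW (η₁^2/(2*l₁)) (η₂^2/(2*l₂)) (ρ*η₁*η₂/(l₁+l₂)) m₁ m₂ p) + (((1/2)*(ρ*η₁*η₂)) * ((pd1 e p * pd2 e p + e p * pd1 (pd2 e) p + (e p * pd2 e p) * auxL1 (η₁^2/(2*l₁)) (η₂^2/(2*l₂)) (ρ*η₁*η₂/(l₁+l₂)) m₁ m₂ p) * auxQW (η₁^2/(2*l₁)) (η₂^2/(2*l₂)) (ρ*η₁*η₂/(l₁+l₂)) m₁ m₂ p) + (((1/2)*η₂^2) * ((pd2 e p * pd2 e p + e p * pd2 (pd2 e) p + (e p * pd2 e p) * auxL2 (η₁^2/(2*l₁)) (η₂^2/(2*l₂)) (ρ*η₁*η₂/(l₁+l₂)) m₁ m₂ p) * auxQW (η₁^2/(2*l₁)) (η₂^2/(2*l₂)) (ρ*η₁*η₂/(l₁+l₂)) m₁ m₂ p) + (((1/2):ℝ) * (((pd1 e p * e p + e p * pd1 e p) * (fun p : ℝ × ℝ => l₁*(m₁-p.1) - (1/2)*η₁^2 * auxL1 (η₁^2/(2*l₁)) (η₂^2/(2*l₂)) (ρ*η₁*η₂/(l₁+l₂))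 m₁ m₂ p - (1/2)*(ρ*η₁*η₂) * auxL2 (η₁^2/(2*l₁)) (η₂^2/(2*l₂)) (ρ*η₁*η₂/(l₁+l₂)) m₁ m₂ p) p + e p * e p * (l₁*(0-1) - (1/2)*η₁^2 * (-(η₂^2/(2*l₂)) * ((η₁^2/(2*l₁))*(η₂^2/(2*l₂))-(ρ*η₁*η₂/(l₁+l₂))^2)⁻¹) - (1/2)*(ρ*η₁*η₂) * ((ρ*η₁*η₂/(l₁+l₂)) * ((η₁^2/(2*l₁))*(η₂^2/(2*l₂))-(ρ*η₁*η₂/(l₁+l₂))^2)⁻¹)) + (e p * e p * (fun p : ℝ × ℝ => l₁*(m₁-p.1) - (1/2)*η₁^2 * auxL1 (η₁^2/(2*l₁)) (η₂^2/(2*l₂)) (ρ*η₁*η₂/(l₁+l₂)) m₁ m₂ p - (1/2)*(ρ*η₁*η₂) * auxL2 (η₁^2/(2*l₁)) (η₂^2/(2*l₂)) (ρ*η₁*η₂/(l₁+l₂)) m₁ m₂ p) p) * auxL1 (η₁^2/(2*l₁)) (η₂^2/(2*l₂)) (ρ*η₁*η₂/(l₁+l₂)) m₁ m₂ p) * auxQW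 (η₁^2/(2*l₁)) (η₂^2/(2*l₂)) (ρ*η₁*η₂/(l₁+l₂)) m₁ m₂ p) + (((1/2):ℝ) * (((pd2 e p * e p + e p * pd2 e p) * (fun p : ℝ × ℝ => l₂*(m₂-p.2) - (1/2)*(ρ*η₁*η₂) * auxL1 (η₁^2/(2*l₁)) (η₂^2/(2*l₂)) (ρ*η₁*η₂/(l₁+l₂)) m₁ m₂ p - (1/2)*η₂^2 * auxL2 (η₁^2/(2*l₁)) (η₂^2/(2*l₂)) (ρ*η₁*η₂/(l₁+l₂)) m₁ m₂ p) p + e p * e p * (l₂*(0-1) - (1/2)*(ρ*η₁*η₂) * ((ρ*η₁*η₂/(l₁+l₂)) * ((η₁^2/(2*l₁))*(η₂^2/(2*l₂))-(ρ*η₁*η₂/(l₁+l₂))^2)⁻¹) - (1/2)*η₂^2 * (-(η₁^2/(2*l₁)) * ((η₁^2/(2*l₁))*(η₂^2/(2*l₂))-(ρ*η₁*η₂/(l₁+l₂))^2)⁻¹)) + (e p * e p * (fun p : ℝ × ℝ => l₂*(m₂-p.2) - (1/2)*(ρ*η₁*η₂) * auxL1 (η₁^2/(2*l₁)) (η₂^2/(2*l₂))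 (ρ*η₁*η₂/(l₁+l₂)) m₁ m₂ p - (1/2)*η₂^2 * auxL2 (η₁^2/(2*l₁)) (η₂^2/(2*l₂)) (ρ*η₁*η₂/(l₁+l₂)) m₁ m₂ p) p) * auxL2 (η₁^2/(2*l₁)) (η₂^2/(2*l₂)) (ρ*η₁*η₂/(l₁+l₂)) m₁ m₂ p) * auxQW (η₁^2/(2*l₁)) (η₂^2/(2*l₂)) (ρ*η₁*η₂/(l₁+l₂)) m₁ m₂ p)))))) := by
      funext p
      simp only [gen]
      rw [congrFun hsymm p]
      simp only [auxL1, auxL2]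
      exact aux_pointwise_identity l₁ l₂ η₁ η₂ ρ m₁ m₂ p.1 p.2 (e p) (pd1 e p) (pd2 e p)
        (pd1 (pd1 e) p) (pd2 (pd1 e) p) (pd2 (pd2 e) p) _ hl₁.ne' hl₂.ne' hl12.ne' hdd'
    have J1 : Integrable (fun p : ℝ × ℝ => ((1/2)*η₁^2) * ((pd1 e p * pd1 e p + e p * pd1 (pd1 e) p + (e p * pd1 e p) * auxL1 (η₁^2/(2*l₁)) (η₂^2/(2*l₂)) (ρ*η₁*η₂/(l₁+l₂)) m₁ m₂ p) * auxQW (η₁^2/(2*l₁)) (η₂^2/(2*l₂)) (ρ*η₁*η₂/(l₁+l₂)) m₁ m₂ p)) := hInt1.const_mul _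
    have J2 : Integrable (fun p : ℝ × ℝ => ((1/2)*(ρ*η₁*η₂)) * ((pd2 e p * pd1 e p + e p * pd2 (pd1 e) p + (e p * pd1 e p) * auxL2 (η₁^2/(2*l₁)) (η₂^2/(2*l₂)) (ρ*η₁*η₂/(l₁+l₂)) m₁ m₂ p) * auxQW (η₁^2/(2*l₁)) (η₂^2/(2*l₂)) (ρ*η₁*η₂/(l₁+l₂)) m₁ m₂ p)) := hInt2.const_mul _
    have J3 : Integrable (fun p : ℝ × ℝ => ((1/2)*(ρ*η₁*η₂)) * ((pd1 e p * pd2 e p + e p * pd1 (pd2 e) p + (e p * pd2 e p) * auxL1 (η₁^2/(2*l₁)) (η₂^2/(2*l₂)) (ρ*η₁*η₂/(l₁+l₂)) m₁ m₂ p) * auxQW (η₁^2/(2*l₁)) (η₂^2/(2*l₂)) (ρ*η₁*η₂/(l₁+l₂)) m₁ m₂ p)) := hInt3.const_mul _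
    have J4 : Integrable (fun p : ℝ × ℝ => ((1/2)*η₂^2) * ((pd2 e p * pd2 e p + e p * pd2 (pd2 e) p + (e p * pd2 e p) * auxL2 (η₁^2/(2*l₁)) (η₂^2/(2*l₂)) (ρ*η₁*η₂/(l₁+l₂)) m₁ m₂ p) * auxQW (η₁^2/(2*l₁)) (η₂^2/(2*l₂)) (ρ*η₁*η₂/(l₁+l₂)) m₁ m₂ p)) := hInt4.const_mul _
    have J5 : Integrable (fun p : ℝ × ℝ => ((1/2):ℝ) * (((pd1 e p * e p + e p * pd1 e p) * (fun p : ℝ × ℝ => l₁*(m₁-p.1) - (1/2)*η₁^2 * auxL1 (η₁^2/(2*l₁)) (η₂^2/(2*l₂)) (ρ*η₁*η₂/(l₁+l₂)) m₁ m₂ p - (1/2)*(ρ*η₁*η₂) * auxL2 (η₁^2/(2*l₁)) (η₂^2/(2*l₂)) (ρ*η₁*η₂/(l₁+l₂)) m₁ m₂ p) p + e p * e p * (l₁*(0-1) - (1/2)*η₁^2 * (-(η₂^2/(2*l₂)) * ((η₁^2/(2*l₁))*(η₂^2/(2*l₂))-(ρ*η₁*η₂/(l₁+l₂))^2)⁻¹)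 - (1/2)*(ρ*η₁*η₂) * ((ρ*η₁*η₂/(l₁+l₂)) * ((η₁^2/(2*l₁))*(η₂^2/(2*l₂))-(ρ*η₁*η₂/(l₁+l₂))^2)⁻¹)) + (e p * e p * (fun p : ℝ × ℝ => l₁*(m₁-p.1) - (1/2)*η₁^2 * auxL1 (η₁^2/(2*l₁)) (η₂^2/(2*l₂)) (ρ*η₁*η₂/(l₁+l₂)) m₁ m₂ p - (1/2)*(ρ*η₁*η₂) * auxL2 (η₁^2/(2*l₁)) (η₂^2/(2*l₂)) (ρ*η₁*η₂/(l₁+l₂)) m₁ m₂ p) p) * auxL1 (η₁^2/(2*l₁)) (η₂^2/(2*l₂)) (ρ*η₁*η₂/(l₁+l₂)) m₁ m₂ p) * auxQW (η₁^2/(2*l₁)) (η₂^2/(2*l₂)) (ρ*η₁*η₂/(l₁+l₂)) m₁ m₂ p)) := hInt5.const_mul _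
    have J6 : Integrable (fun p : ℝ × ℝ => ((1/2):ℝ) * (((pd2 e p * e p + e p * pd2 e p) * (fun p : ℝ × ℝ => l₂*(m₂-p.2) - (1/2)*(ρ*η₁*η₂) * auxL1 (η₁^2/(2*l₁)) (η₂^2/(2*l₂)) (ρ*η₁*η₂/(l₁+l₂)) m₁ m₂ p - (1/2)*η₂^2 * auxL2 (η₁^2/(2*l₁)) (η₂^2/(2*l₂)) (ρ*η₁*η₂/(l₁+l₂)) m₁ m₂ p) p + e p * e p * (l₂*(0-1) - (1/2)*(ρ*η₁*η₂) * ((ρ*η₁*η₂/(l₁+l₂)) * ((η₁^2/(2*l₁))*(η₂^2/(2*l₂))-(ρ*η₁*η₂/(l₁+l₂))^2)⁻¹) - (1/2)*η₂^2 * (-(η₁^2/(2*l₁)) * ((η₁^2/(2*l₁))*(η₂^2/(2*l₂))-(ρ*η₁*η₂/(l₁+l₂))^2)⁻¹)) + (e p * e p * (fun p : ℝ × ℝ => l₂*(m₂-p.2) - (1/2)*(ρ*η₁*η₂) * auxL1 (η₁^2/(2*l₁)) (η₂^2/(2*l₂)) (ρ*η₁*η₂/(l₁+l₂)) m₁ m₂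 p - (1/2)*η₂^2 * auxL2 (η₁^2/(2*l₁)) (η₂^2/(2*l₂)) (ρ*η₁*η₂/(l₁+l₂)) m₁ m₂ p) p) * auxL2 (η₁^2/(2*l₁)) (η₂^2/(2*l₂)) (ρ*η₁*η₂/(l₁+l₂)) m₁ m₂ p) * auxQW (η₁^2/(2*l₁)) (η₂^2/(2*l₂)) (ρ*η₁*η₂/(l₁+l₂)) m₁ m₂ p)) := hInt6.const_mul _
    have S5 : Integrable (fun p : ℝ × ℝ => ((1/2):ℝ) * (((pd1 e p * e p + e p * pd1 e p) * (fun p : ℝ × ℝ => l₁*(m₁-p.1) - (1/2)*η₁^2 * auxL1 (η₁^2/(2*l₁)) (η₂^2/(2*l₂)) (ρ*η₁*η₂/(l₁+l₂)) m₁ m₂ p - (1/2)*(ρ*η₁*η₂) * auxL2 (η₁^2/(2*l₁)) (η₂^2/(2*l₂)) (ρ*η₁*η₂/(l₁+l₂)) m₁ m₂ p) p + e p * e p * (l₁*(0-1) - (1/2)*η₁^2 * (-(η₂^2/(2*l₂)) * ((η₁^2/(2*l₁))*(η₂^2/(2*l₂))-(ρ*η₁*η₂/(l₁+l₂))^2)⁻¹)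 - (1/2)*(ρ*η₁*η₂) * ((ρ*η₁*η₂/(l₁+l₂)) * ((η₁^2/(2*l₁))*(η₂^2/(2*l₂))-(ρ*η₁*η₂/(l₁+l₂))^2)⁻¹)) + (e p * e p * (fun p : ℝ × ℝ => l₁*(m₁-p.1) - (1/2)*η₁^2 * auxL1 (η₁^2/(2*l₁)) (η₂^2/(2*l₂)) (ρ*η₁*η₂/(l₁+l₂)) m₁ m₂ p - (1/2)*(ρ*η₁*η₂) * auxL2 (η₁^2/(2*l₁)) (η₂^2/(2*l₂)) (ρ*η₁*η₂/(l₁+l₂)) m₁ m₂ p) p) * auxL1 (η₁^2/(2*l₁)) (η₂^2/(2*l₂)) (ρ*η₁*η₂/(l₁+l₂)) m₁ m₂ p) * auxQW (η₁^2/(2*l₁)) (η₂^2/(2*l₂)) (ρ*η₁*η₂/(l₁+l₂)) m₁ m₂ p) + (((1/2):ℝ) * (((pd2 e p * e p + e p * pd2 e p) * (fun p : ℝ × ℝ => l₂*(m₂-p.2) - (1/2)*(ρ*η₁*η₂) * auxL1 (η₁^2/(2*l₁)) (η₂^2/(2*l₂)) (ρ*η₁*η₂/(l₁+l₂)) m₁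 m₂ p - (1/2)*η₂^2 * auxL2 (η₁^2/(2*l₁)) (η₂^2/(2*l₂)) (ρ*η₁*η₂/(l₁+l₂)) m₁ m₂ p) p + e p * e p * (l₂*(0-1) - (1/2)*(ρ*η₁*η₂) * ((ρ*η₁*η₂/(l₁+l₂)) * ((η₁^2/(2*l₁))*(η₂^2/(2*l₂))-(ρ*η₁*η₂/(l₁+l₂))^2)⁻¹) - (1/2)*η₂^2 * (-(η₁^2/(2*l₁)) * ((η₁^2/(2*l₁))*(η₂^2/(2*l₂))-(ρ*η₁*η₂/(l₁+l₂))^2)⁻¹)) + (e p * e p * (fun p : ℝ × ℝ => l₂*(m₂-p.2) - (1/2)*(ρ*η₁*η₂) * auxL1 (η₁^2/(2*l₁)) (η₂^2/(2*l₂)) (ρ*η₁*η₂/(l₁+l₂)) m₁ m₂ p - (1/2)*η₂^2 * auxL2 (η₁^2/(2*l₁)) (η₂^2/(2*l₂)) (ρ*η₁*η₂/(l₁+l₂)) m₁ m₂ p) p) * auxL2 (η₁^2/(2*l₁)) (η₂^2/(2*l₂)) (ρ*η₁*η₂/(l₁+l₂)) m₁ m₂ p) * auxQW (η₁^2/(2*l₁))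 (η₂^2/(2*l₂)) (ρ*η₁*η₂/(l₁+l₂)) m₁ m₂ p))) := J5.add J6
    have S4 : Integrable (fun p : ℝ × ℝ => ((1/2)*η₂^2) * ((pd2 e p * pd2 e p + e p * pd2 (pd2 e) p + (e p * pd2 e p) * auxL2 (η₁^2/(2*l₁)) (η₂^2/(2*l₂)) (ρ*η₁*η₂/(l₁+l₂)) m₁ m₂ p) * auxQW (η₁^2/(2*l₁)) (η₂^2/(2*l₂)) (ρ*η₁*η₂/(l₁+l₂)) m₁ m₂ p) + (((1/2):ℝ) * (((pd1 e p * e p + e p * pd1 e p) * (fun p : ℝ × ℝ => l₁*(m₁-p.1) - (1/2)*η₁^2 * auxL1 (η₁^2/(2*l₁)) (η₂^2/(2*l₂)) (ρ*η₁*η₂/(l₁+l₂)) m₁ m₂ p - (1/2)*(ρ*η₁*η₂) * auxL2 (η₁^2/(2*l₁)) (η₂^2/(2*l₂)) (ρ*η₁*η₂/(l₁+l₂)) m₁ m₂ p) p + e p * e p * (l₁*(0-1) - (1/2)*η₁^2 * (-(η₂^2/(2*l₂)) * ((η₁^2/(2*l₁))*(η₂^2/(2*l₂))-(ρ*η₁*η₂/(l₁+l₂))^2)⁻¹)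 - (1/2)*(ρ*η₁*η₂) * ((ρ*η₁*η₂/(l₁+l₂)) * ((η₁^2/(2*l₁))*(η₂^2/(2*l₂))-(ρ*η₁*η₂/(l₁+l₂))^2)⁻¹)) + (e p * e p * (fun p : ℝ × ℝ => l₁*(m₁-p.1) - (1/2)*η₁^2 * auxL1 (η₁^2/(2*l₁)) (η₂^2/(2*l₂)) (ρ*η₁*η₂/(l₁+l₂)) m₁ m₂ p - (1/2)*(ρ*η₁*η₂) * auxL2 (η₁^2/(2*l₁)) (η₂^2/(2*l₂)) (ρ*η₁*η₂/(l₁+l₂)) m₁ m₂ p) p) * auxL1 (η₁^2/(2*l₁)) (η₂^2/(2*l₂)) (ρ*η₁*η₂/(l₁+l₂)) m₁ m₂ p) * auxQW (η₁^2/(2*l₁)) (η₂^2/(2*l₂)) (ρ*η₁*η₂/(l₁+l₂)) m₁ m₂ p) + (((1/2):ℝ) * (((pd2 e p * e p + e p * pd2 e p) * (fun p : ℝ × ℝ => l₂*(m₂-p.2) - (1/2)*(ρ*η₁*η₂) * auxL1 (η₁^2/(2*l₁)) (η₂^2/(2*l₂)) (ρ*η₁*η₂/(l₁+l₂)) m₁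 m₂ p - (1/2)*η₂^2 * auxL2 (η₁^2/(2*l₁)) (η₂^2/(2*l₂)) (ρ*η₁*η₂/(l₁+l₂)) m₁ m₂ p) p + e p * e p * (l₂*(0-1) - (1/2)*(ρ*η₁*η₂) * ((ρ*η₁*η₂/(l₁+l₂)) * ((η₁^2/(2*l₁))*(η₂^2/(2*l₂))-(ρ*η₁*η₂/(l₁+l₂))^2)⁻¹) - (1/2)*η₂^2 * (-(η₁^2/(2*l₁)) * ((η₁^2/(2*l₁))*(η₂^2/(2*l₂))-(ρ*η₁*η₂/(l₁+l₂))^2)⁻¹)) + (e p * e p * (fun p : ℝ × ℝ => l₂*(m₂-p.2) - (1/2)*(ρ*η₁*η₂) * auxL1 (η₁^2/(2*l₁)) (η₂^2/(2*l₂)) (ρ*η₁*η₂/(l₁+l₂)) m₁ m₂ p - (1/2)*η₂^2 * auxL2 (η₁^2/(2*l₁)) (η₂^2/(2*l₂)) (ρ*η₁*η₂/(l₁+l₂)) m₁ m₂ p) p) * auxL2 (η₁^2/(2*l₁)) (η₂^2/(2*l₂)) (ρ*η₁*η₂/(l₁+l₂)) m₁ m₂ p) * auxQW (η₁^2/(2*l₁))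 (η₂^2/(2*l₂)) (ρ*η₁*η₂/(l₁+l₂)) m₁ m₂ p)))) := J4.add S5
    have S3 : Integrable (fun p : ℝ × ℝ => ((1/2)*(ρ*η₁*η₂)) * ((pd1 e p * pd2 e p + e p * pd1 (pd2 e) p + (e p * pd2 e p) * auxL1 (η₁^2/(2*l₁)) (η₂^2/(2*l₂)) (ρ*η₁*η₂/(l₁+l₂)) m₁ m₂ p) * auxQW (η₁^2/(2*l₁)) (η₂^2/(2*l₂)) (ρ*η₁*η₂/(l₁+l₂)) m₁ m₂ p) + (((1/2)*η₂^2) * ((pd2 e p * pd2 e p + e p * pd2 (pd2 e) p + (e p * pd2 e p) * auxL2 (η₁^2/(2*l₁)) (η₂^2/(2*l₂)) (ρ*η₁*η₂/(l₁+l₂)) m₁ m₂ p) * auxQW (η₁^2/(2*l₁)) (η₂^2/(2*l₂)) (ρ*η₁*η₂/(l₁+l₂)) m₁ m₂ p) + (((1/2):ℝ) * (((pd1 e p * e p + e p * pd1 e p) * (fun p : ℝ × ℝ => l₁*(m₁-p.1) - (1/2)*η₁^2 * auxL1 (η₁^2/(2*l₁)) (η₂^2/(2*l₂)) (ρ*η₁*η₂/(l₁+l₂))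 m₁ m₂ p - (1/2)*(ρ*η₁*η₂) * auxL2 (η₁^2/(2*l₁)) (η₂^2/(2*l₂)) (ρ*η₁*η₂/(l₁+l₂)) m₁ m₂ p) p + e p * e p * (l₁*(0-1) - (1/2)*η₁^2 * (-(η₂^2/(2*l₂)) * ((η₁^2/(2*l₁))*(η₂^2/(2*l₂))-(ρ*η₁*η₂/(l₁+l₂))^2)⁻¹) - (1/2)*(ρ*η₁*η₂) * ((ρ*η₁*η₂/(l₁+l₂)) * ((η₁^2/(2*l₁))*(η₂^2/(2*l₂))-(ρ*η₁*η₂/(l₁+l₂))^2)⁻¹)) + (e p * e p * (fun p : ℝ × ℝ => l₁*(m₁-p.1) - (1/2)*η₁^2 * auxL1 (η₁^2/(2*l₁)) (η₂^2/(2*l₂)) (ρ*η₁*η₂/(l₁+l₂)) m₁ m₂ p - (1/2)*(ρ*η₁*η₂) * auxL2 (η₁^2/(2*l₁)) (η₂^2/(2*l₂)) (ρ*η₁*η₂/(l₁+l₂)) m₁ m₂ p) p) * auxL1 (η₁^2/(2*l₁)) (η₂^2/(2*l₂)) (ρ*η₁*η₂/(l₁+l₂)) m₁ m₂ p) * auxQW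 (η₁^2/(2*l₁)) (η₂^2/(2*l₂)) (ρ*η₁*η₂/(l₁+l₂)) m₁ m₂ p) + (((1/2):ℝ) * (((pd2 e p * e p + e p * pd2 e p) * (fun p : ℝ × ℝ => l₂*(m₂-p.2) - (1/2)*(ρ*η₁*η₂) * auxL1 (η₁^2/(2*l₁)) (η₂^2/(2*l₂)) (ρ*η₁*η₂/(l₁+l₂)) m₁ m₂ p - (1/2)*η₂^2 * auxL2 (η₁^2/(2*l₁)) (η₂^2/(2*l₂)) (ρ*η₁*η₂/(l₁+l₂)) m₁ m₂ p) p + e p * e p * (l₂*(0-1) - (1/2)*(ρ*η₁*η₂) * ((ρ*η₁*η₂/(l₁+l₂)) * ((η₁^2/(2*l₁))*(η₂^2/(2*l₂))-(ρ*η₁*η₂/(l₁+l₂))^2)⁻¹) - (1/2)*η₂^2 * (-(η₁^2/(2*l₁)) * ((η₁^2/(2*l₁))*(η₂^2/(2*l₂))-(ρ*η₁*η₂/(l₁+l₂))^2)⁻¹)) + (e p * e p * (fun p : ℝ × ℝ => l₂*(m₂-p.2) - (1/2)*(ρ*η₁*η₂) * auxL1 (η₁^2/(2*l₁)) (η₂^2/(2*l₂))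 (ρ*η₁*η₂/(l₁+l₂)) m₁ m₂ p - (1/2)*η₂^2 * auxL2 (η₁^2/(2*l₁)) (η₂^2/(2*l₂)) (ρ*η₁*η₂/(l₁+l₂)) m₁ m₂ p) p) * auxL2 (η₁^2/(2*l₁)) (η₂^2/(2*l₂)) (ρ*η₁*η₂/(l₁+l₂)) m₁ m₂ p) * auxQW (η₁^2/(2*l₁)) (η₂^2/(2*l₂)) (ρ*η₁*η₂/(l₁+l₂)) m₁ m₂ p))))) := J3.add S4
    have S2 : Integrable (fun p : ℝ × ℝ => ((1/2)*(ρ*η₁*η₂)) * ((pd2 e p * pd1 e p + e p * pd2 (pd1 e) p + (e p * pd1 e p) * auxL2 (η₁^2/(2*l₁)) (η₂^2/(2*l₂)) (ρ*η₁*η₂/(l₁+l₂)) m₁ m₂ p) * auxQW (η₁^2/(2*l₁)) (η₂^2/(2*l₂)) (ρ*η₁*η₂/(l₁+l₂)) m₁ m₂ p) + (((1/2)*(ρ*η₁*η₂)) * ((pd1 e p * pd2 e p + e p * pd1 (pd2 e) p + (e p * pd2 e p) * auxL1 (η₁^2/(2*l₁)) (η₂^2/(2*l₂)) (ρ*η₁*η₂/(l₁+l₂))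 m₁ m₂ p) * auxQW (η₁^2/(2*l₁)) (η₂^2/(2*l₂)) (ρ*η₁*η₂/(l₁+l₂)) m₁ m₂ p) + (((1/2)*η₂^2) * ((pd2 e p * pd2 e p + e p * pd2 (pd2 e) p + (e p * pd2 e p) * auxL2 (η₁^2/(2*l₁)) (η₂^2/(2*l₂)) (ρ*η₁*η₂/(l₁+l₂)) m₁ m₂ p) * auxQW (η₁^2/(2*l₁)) (η₂^2/(2*l₂)) (ρ*η₁*η₂/(l₁+l₂)) m₁ m₂ p) + (((1/2):ℝ) * (((pd1 e p * e p + e p * pd1 e p) * (fun p : ℝ × ℝ => l₁*(m₁-p.1) - (1/2)*η₁^2 * auxL1 (η₁^2/(2*l₁)) (η₂^2/(2*l₂)) (ρ*η₁*η₂/(l₁+l₂)) m₁ m₂ p - (1/2)*(ρ*η₁*η₂) * auxL2 (η₁^2/(2*l₁)) (η₂^2/(2*l₂)) (ρ*η₁*η₂/(l₁+l₂)) m₁ m₂ p) p + e p * e p * (l₁*(0-1) - (1/2)*η₁^2 * (-(η₂^2/(2*l₂)) * ((η₁^2/(2*l₁))*(η₂^2/(2*l₂))-(ρ*η₁*η₂/(l₁+l₂))^2)⁻¹)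 - (1/2)*(ρ*η₁*η₂) * ((ρ*η₁*η₂/(l₁+l₂)) * ((η₁^2/(2*l₁))*(η₂^2/(2*l₂))-(ρ*η₁*η₂/(l₁+l₂))^2)⁻¹)) + (e p * e p * (fun p : ℝ × ℝ => l₁*(m₁-p.1) - (1/2)*η₁^2 * auxL1 (η₁^2/(2*l₁)) (η₂^2/(2*l₂)) (ρ*η₁*η₂/(l₁+l₂)) m₁ m₂ p - (1/2)*(ρ*η₁*η₂) * auxL2 (η₁^2/(2*l₁)) (η₂^2/(2*l₂)) (ρ*η₁*η₂/(l₁+l₂)) m₁ m₂ p) p) * auxL1 (η₁^2/(2*l₁)) (η₂^2/(2*l₂)) (ρ*η₁*η₂/(l₁+l₂)) m₁ m₂ p) * auxQW (η₁^2/(2*l₁)) (η₂^2/(2*l₂)) (ρ*η₁*η₂/(l₁+l₂)) m₁ m₂ p) + (((1/2):ℝ) * (((pd2 e p * e p + e p * pd2 e p) * (fun p : ℝ × ℝ => l₂*(m₂-p.2) - (1/2)*(ρ*η₁*η₂) * auxL1 (η₁^2/(2*l₁)) (η₂^2/(2*l₂)) (ρ*η₁*η₂/(l₁+l₂)) m₁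 m₂ p - (1/2)*η₂^2 * auxL2 (η₁^2/(2*l₁)) (η₂^2/(2*l₂)) (ρ*η₁*η₂/(l₁+l₂)) m₁ m₂ p) p + e p * e p * (l₂*(0-1) - (1/2)*(ρ*η₁*η₂) * ((ρ*η₁*η₂/(l₁+l₂)) * ((η₁^2/(2*l₁))*(η₂^2/(2*l₂))-(ρ*η₁*η₂/(l₁+l₂))^2)⁻¹) - (1/2)*η₂^2 * (-(η₁^2/(2*l₁)) * ((η₁^2/(2*l₁))*(η₂^2/(2*l₂))-(ρ*η₁*η₂/(l₁+l₂))^2)⁻¹)) + (e p * e p * (fun p : ℝ × ℝ => l₂*(m₂-p.2) - (1/2)*(ρ*η₁*η₂) * auxL1 (η₁^2/(2*l₁)) (η₂^2/(2*l₂)) (ρ*η₁*η₂/(l₁+l₂)) m₁ m₂ p - (1/2)*η₂^2 * auxL2 (η₁^2/(2*l₁)) (η₂^2/(2*l₂)) (ρ*η₁*η₂/(l₁+l₂)) m₁ m₂ p) p) * auxL2 (η₁^2/(2*l₁)) (η₂^2/(2*l₂)) (ρ*η₁*η₂/(l₁+l₂)) m₁ m₂ p) * auxQW (η₁^2/(2*l₁))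 (η₂^2/(2*l₂)) (ρ*η₁*η₂/(l₁+l₂)) m₁ m₂ p)))))) := J2.add S3
    rw [hpt, integral_add J1 S2, integral_add J2 S3, integral_add J3 S4,
      integral_add J4 S5, integral_add J5 J6,
      integral_const_mul, integral_const_mul, integral_const_mul, integral_const_mul,
      integral_const_mul, integral_const_mul, hI1, hI2, hI3, hI4, hI5, hI6]
    ring
  rw [integral_add hIntA hIntB] at hsum
  -- pointwise coercivity
  have hmono : ∫ p : ℝ × ℝ, ((1/2) * min (η₁^2) (η₂^2) * (1 - ρ)) *
        ((((pd1 e p)^2 + (pd2 e p)^2)) * auxQW (η₁^2/(2*l₁)) (η₂^2/(2*l₂)) (ρ*η₁*η₂/(l₁+l₂)) m₁ m₂ p) ≤ ∫ p : ℝ × ℝ, ((1/2)*η₁^2*(pd1 e p * pd1 e p) + ρ*η₁*η₂*(pd1 e p * pd2 e p) + (1/2)*η₂^2*(pd2 e p * pd2 e p)) * auxQW (η₁^2/(2*l₁)) (η₂^2/(2*l₂)) (ρ*η₁*η₂/(l₁+l₂)) m₁ m₂ p := by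
    refine integral_mono ?_ hIntB ?_
    swap
    · intro p
      have hW := (auxQW_pos (a := (η₁^2/(2*l₁))) (b := (η₂^2/(2*l₂))) (c := (ρ*η₁*η₂/(l₁+l₂))) (m₁ := m₁) (m₂ := m₂) p).le
      have hsc : ((1/2) * min (η₁^2) (η₂^2) * (1 - ρ)) * (((pd1 e p)^2 + (pd2 e p)^2))
          ≤ ((1/2)*η₁^2*(pd1 e p * pd1 e p) + ρ*η₁*η₂*(pd1 e p * pd2 e p) + (1/2)*η₂^2*(pd2 e p * pd2 e p)) := by
        rcases le_total (η₁^2) (η₂^2) with h | h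
        · rw [min_eq_left h]
          nlinarith [mul_nonneg hρ0 (sq_nonneg (η₁*pd1 e p + η₂*pd2 e p)),
            sq_nonneg (pd1 e p), sq_nonneg (pd2 e p),
            mul_nonneg (mul_nonneg (sub_nonneg.mpr h) (by linarith : (0:ℝ) ≤ 1 - ρ)) (sq_nonneg (pd2 e p))]
        · rw [min_eq_right h]
          nlinarith [mul_nonneg hρ0 (sq_nonneg (η₁*pd1 e p + η₂*pd2 e p)),
            sq_nonneg (pd1 e p), sq_nonneg (pd2 e p),
            mul_nonneg (mul_nonneg (sub_nonneg.mpr h) (by linarith : (0:ℝ) ≤ 1 - ρ)) (sq_nonneg (pd1 e p))]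
      calc ((1/2) * min (η₁^2) (η₂^2) * (1 - ρ)) * ((((pd1 e p)^2 + (pd2 e p)^2)) * auxQW (η₁^2/(2*l₁)) (η₂^2/(2*l₂)) (ρ*η₁*η₂/(l₁+l₂)) m₁ m₂ p)
          = (((1/2) * min (η₁^2) (η₂^2) * (1 - ρ)) * (((pd1 e p)^2 + (pd2 e p)^2))) * auxQW (η₁^2/(2*l₁)) (η₂^2/(2*l₂)) (ρ*η₁*η₂/(l₁+l₂)) m₁ m₂ p := by
            ring
        _ ≤ ((1/2)*η₁^2*(pd1 e p * pd1 e p) + ρ*η₁*η₂*(pd1 e p * pd2 e p) + (1/2)*η₂^2*(pd2 e p * pd2 e p)) * auxQW (η₁^2/(2*l₁)) (η₂^2/(2*l₂)) (ρ*η₁*η₂/(l₁+l₂)) m₁ m₂ p := mul_le_mul_of_nonneg_right hsc hW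
    · apply Integrable.const_mul
      have hsq : Integrable (fun p : ℝ × ℝ => ((pd1 e p * pd1 e p) + (pd2 e p * pd2 e p)) * auxQW (η₁^2/(2*l₁)) (η₂^2/(2*l₂)) (ρ*η₁*η₂/(l₁+l₂)) m₁ m₂ p) :=
        aux_int_QW haa0 hbb0 hdd ((hucont.mul hucont).add (hvcont.mul hvcont))
          (aux_pg_add (aux_pg_mul hpg_u hpg_u) (aux_pg_mul hpg_v hpg_v))
      have : (fun p : ℝ × ℝ => ((pd1 e p * pd1 e p) + (pd2 e p * pd2 e p)) * auxQW (η₁^2/(2*l₁)) (η₂^2/(2*l₂)) (ρ*η₁*η₂/(l₁+l₂)) m₁ m₂ p)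
          = fun p : ℝ × ℝ => (((pd1 e p)^2 + (pd2 e p)^2)) * auxQW (η₁^2/(2*l₁)) (η₂^2/(2*l₂)) (ρ*η₁*η₂/(l₁+l₂)) m₁ m₂ p := by
        funext p; ring
      rwa [this] at hsq
  rw [integral_const_mul] at hmono
  -- translate gaussPi into auxQW
  have hPi : ∀ q : ℝ × ℝ, gaussPi l₁ l₂ η₁ η₂ ρ m₁ m₂ q = ((2*π)⁻¹ * ((η₁^2/(2*l₁)) * (η₂^2/(2*l₂)) - (ρ*η₁*η₂/(l₁+l₂))^2) ^ (-(1:ℝ)/2)) * auxQW (η₁^2/(2*l₁)) (η₂^2/(2*l₂)) (ρ*η₁*η₂/(l₁+l₂)) m₁ m₂ q :=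
    aux_gaussPi_eq l₁ l₂ η₁ η₂ ρ m₁ m₂ hdd'
  have hK : (0:ℝ) ≤ ((2*π)⁻¹ * ((η₁^2/(2*l₁)) * (η₂^2/(2*l₂)) - (ρ*η₁*η₂/(l₁+l₂))^2) ^ (-(1:ℝ)/2)) := by positivity
  simp only [hPi]
  have hrw1 : (fun p : ℝ × ℝ => ((pd1 e p)^2 + (pd2 e p)^2) * (((2*π)⁻¹ * ((η₁^2/(2*l₁)) * (η₂^2/(2*l₂)) - (ρ*η₁*η₂/(l₁+l₂))^2) ^ (-(1:ℝ)/2)) * auxQW (η₁^2/(2*l₁)) (η₂^2/(2*l₂)) (ρ*η₁*η₂/(l₁+l₂)) m₁ m₂ p))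
      = fun p : ℝ × ℝ => ((2*π)⁻¹ * ((η₁^2/(2*l₁)) * (η₂^2/(2*l₂)) - (ρ*η₁*η₂/(l₁+l₂))^2) ^ (-(1:ℝ)/2)) * ((((pd1 e p)^2 + (pd2 e p)^2)) * auxQW (η₁^2/(2*l₁)) (η₂^2/(2*l₂)) (ρ*η₁*η₂/(l₁+l₂)) m₁ m₂ p) := by
    funext p; ring
  have hrw2 : (fun p : ℝ × ℝ => e p * gen l₁ l₂ η₁ η₂ ρ m₁ m₂ e p * (((2*π)⁻¹ * ((η₁^2/(2*l₁)) * (η₂^2/(2*l₂)) - (ρ*η₁*η₂/(l₁+l₂))^2) ^ (-(1:ℝ)/2)) * auxQW (η₁^2/(2*l₁)) (η₂^2/(2*l₂)) (ρ*η₁*η₂/(l₁+l₂)) m₁ m₂ p))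
      = fun p : ℝ × ℝ => ((2*π)⁻¹ * ((η₁^2/(2*l₁)) * (η₂^2/(2*l₂)) - (ρ*η₁*η₂/(l₁+l₂))^2) ^ (-(1:ℝ)/2)) * ((e p * gen l₁ l₂ η₁ η₂ ρ m₁ m₂ e p) * auxQW (η₁^2/(2*l₁)) (η₂^2/(2*l₂)) (ρ*η₁*η₂/(l₁+l₂)) m₁ m₂ p) := by
    funext p; ring
  rw [hrw1, hrw2, integral_const_mul, integral_const_mul]
  have hcore := mul_le_mul_of_nonneg_left hmono hK
  nlinarith [hcore, hsum, hK]

end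
end
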